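/- arXiv:math/9907135 — 4 statements merged into one kernel-verified Lean document; each statement's English description precedes it below -/
import Mathlib

section
/- Let D ≥ 1 and let h_{αβ} (α, β = 1,…,D) be a smooth symmetric tensor field on ℝ^D (h_{αβ} = h_{βα}) satisfying the rank-2 Killing equation ∂_α h_{βγ} + ∂_β h_{γα} + ∂_γ h_{αβ} = 0 identically on ℝ^D for all α, β, γ. Then every component h_{αβ} is a polynomial function of degree at most 2; in particular the space of such fields h is finite-dimensional. -/
/-- The partial derivative `∂_μ f` of a function `f : ℝ^D → ℝ`. -/
noncomputable def pd {D : ℕ} (μ : Fin D) (f : (Fin D → ℝ) → ℝ) : (Fin D → ℝ) → ℝ :=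
  fun x => fderiv ℝ f x (Pi.single μ 1)

section Aux

variable {D : ℕ}

private lemma top1' : ((⊤:ℕ∞) : WithTop ℕ∞) + 1 ≤ ((⊤:ℕ∞) : WithTop ℕ∞) := by
  exact_mod_cast le_top

private lemma sm_diff {g : (Fin D → ℝ) → ℝ} (hg : ContDiff ℝ (⊤ : ℕ∞) g) :
    Differentiable ℝ g :=
  hg.differentiable (by simp)

private lemma pd_contDiff {f : (Fin D → ℝ) → ℝ} (hf : ContDiff ℝ (⊤ : ℕ∞) f) (μ : Fin D) :
    ContDiff ℝ (⊤ : ℕ∞) (pd μ f) :=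
  (hf.fderiv_right top1').clm_apply contDiff_const

private lemma pd_comm {f : (Fin D → ℝ) → ℝ} (hf : ContDiff ℝ (⊤ : ℕ∞) f) (μ ν : Fin D) :
    pd μ (pd ν f) = pd ν (pd μ f) := by
  funext x
  have hd : Differentiable ℝ f := sm_diff hf
  have hd2 : Differentiable ℝ (fderiv ℝ f) :=
    (hf.fderiv_right top1').differentiable (by simp)
  have e1 : ∀ v w : Fin D → ℝ,
      fderiv ℝ (fun y => fderiv ℝ f y v) x w = fderiv ℝ (fderiv ℝ f) x w v := by
    intro v w
    rw [fderiv_clm_apply (hd2 x) (differentiableAt_const v)]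
    simp
  have sym := second_derivative_symmetric (f' := fderiv ℝ f)
    (fun y => (hd y).hasFDerivAt) ((hd2 x).hasFDerivAt)
  show fderiv ℝ (fun y => fderiv ℝ f y (Pi.single ν 1)) x (Pi.single μ 1)
     = fderiv ℝ (fun y => fderiv ℝ f y (Pi.single μ 1)) x (Pi.single ν 1)
  rw [e1, e1, sym]

private lemma pd_add3 {A B C : (Fin D → ℝ) → ℝ} (hA : Differentiable ℝ A)
    (hB : Differentiable ℝ B) (hC : Differentiable ℝ C)
    (hsum : ∀ x, A x + B x + C x = 0) (μ : Fin D) (x : Fin D → ℝ) :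
    pd μ A x + pd μ B x + pd μ C x = 0 := by
  have hz : (fun y => A y + B y + C y) = (fun _ => (0:ℝ)) := funext hsum
  have hsum' : HasFDerivAt (fun y => A y + B y + C y)
      (fderiv ℝ A x + fderiv ℝ B x + fderiv ℝ C x) x :=
    ((hA x).hasFDerivAt.add (hB x).hasFDerivAt).add (hC x).hasFDerivAt
  rw [hz] at hsum'
  have h0 : HasFDerivAt (fun _ : Fin D → ℝ => (0:ℝ)) 0 x :=
    hasFDerivAt_const (𝕜 := ℝ) (0:ℝ) x
  have hu := hsum'.unique h0
  have := congrArg (fun L : (Fin D → ℝ) →L[ℝ] ℝ => L (Pi.single μ 1)) hu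
  simpa [pd] using this

private lemma fderiv_apply_eq_sum (g : (Fin D → ℝ) → ℝ) (x y : Fin D → ℝ) :
    fderiv ℝ g x y = ∑ i, y i * pd i g x := by
  conv_lhs => rw [← Finset.univ_sum_single y]
  rw [map_sum]
  refine Finset.sum_congr rfl fun i _ => ?_
  have : Pi.single i (y i) = y i • (Pi.single i (1:ℝ) : Fin D → ℝ) := by
    funext j
    rcases eq_or_ne j i with rfl | hj
    · simp
    · simp [Pi.single_eq_of_ne hj]
  rw [this, map_smul]; simp [pd]

private lemma eq_const_of_pd_eq_zero {g : (Fin D → ℝ) → ℝ} (hg : Differentiable ℝ g)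
    (h0 : ∀ i x, pd i g x = 0) (x : Fin D → ℝ) : g x = g 0 := by
  apply is_const_of_fderiv_eq_zero hg
  intro z; ext y
  rw [ContinuousLinearMap.zero_apply, fderiv_apply_eq_sum]
  simp [h0]

private lemma eq_affine_of_pd {g : (Fin D → ℝ) → ℝ} (hg : Differentiable ℝ g) (c : Fin D → ℝ)
    (hpd : ∀ i x, pd i g x = c i) (x : Fin D → ℝ) : g x = g 0 + ∑ i, c i * x i := by
  set L : (Fin D → ℝ) →L[ℝ] ℝ := ∑ i, c i • ContinuousLinearMap.proj i with hLdef
  have hL : ∀ y, L y = ∑ i, c i * y i := by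
    intro y
    simp [hLdef, ContinuousLinearMap.sum_apply]
  have hφ : Differentiable ℝ (fun y => g y - L y) := hg.sub L.differentiable
  have hcon : ∀ z, fderiv ℝ (fun y => g y - L y) z = 0 := by
    intro z
    have h1 : HasFDerivAt (fun y => g y - L y) (fderiv ℝ g z - L) z :=
      (hg z).hasFDerivAt.sub L.hasFDerivAt
    rw [h1.fderiv]
    ext y
    rw [ContinuousLinearMap.zero_apply, ContinuousLinearMap.sub_apply,
      fderiv_apply_eq_sum, hL]
    simp only [hpd]
    rw [sub_eq_zero]
    exact Finset.sum_congr rfl fun i _ => mul_comm _ _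
  have hc := is_const_of_fderiv_eq_zero hφ hcon x 0
  rw [hL, hL] at hc
  simp at hc
  linarith

private noncomputable abbrev pr (j : Fin D) : (Fin D → ℝ) →L[ℝ] ℝ :=
  ContinuousLinearMap.proj (R := ℝ) (φ := fun _ : Fin D => ℝ) j

private lemma eq_quadratic {f : (Fin D → ℝ) → ℝ} (hf : Differentiable ℝ f)
    (a : Fin D → ℝ) (c : Fin D → Fin D → ℝ) (hcs : ∀ i j, c i j = c j i)
    (hpd : ∀ j x, pd j f x = a j + ∑ i, c i j * x i) (x : Fin D → ℝ) :
    f x = f 0 + ∑ j, a j * x j + (1/2) * ∑ i, ∑ j, c i j * (x i * x j) := by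
  set q : (Fin D → ℝ) → ℝ :=
    fun y => ∑ j, a j * y j + (1/2) * ∑ i, ∑ j, c i j * (y i * y j) with hq
  have hproj : ∀ (j : Fin D) (z : Fin D → ℝ),
      HasFDerivAt (fun y : Fin D → ℝ => y j) (pr j) z := fun j z => (pr j).hasFDerivAt
  have hlin : ∀ z : Fin D → ℝ, HasFDerivAt (fun y : Fin D → ℝ => ∑ j, a j * y j)
      (∑ j, a j • pr j) z := by
    intro z
    exact HasFDerivAt.fun_sum fun j _ => ((hproj j z).const_mul (a j))
  have hmul : ∀ (i j : Fin D) (z : Fin D → ℝ),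
      HasFDerivAt (fun y : Fin D → ℝ => c i j * (y i * y j))
        (c i j • ((z i) • pr j + (z j) • pr i)) z := by
    intro i j z
    exact ((hproj i z).mul (hproj j z)).const_mul (c i j)
  have hquad : ∀ z : Fin D → ℝ,
      HasFDerivAt (fun y : Fin D → ℝ => ∑ i, ∑ j, c i j * (y i * y j))
        (∑ i, ∑ j, c i j • ((z i) • pr j + (z j) • pr i)) z := by
    intro z
    exact HasFDerivAt.fun_sum fun i _ => HasFDerivAt.fun_sum fun j _ => hmul i j z
  have hq' : ∀ z : Fin D → ℝ, HasFDerivAt q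
      ((∑ j, a j • pr j) +
       (1/2 : ℝ) • ∑ i, ∑ j, c i j • ((z i) • pr j + (z j) • pr i)) z := by
    intro z
    exact (hlin z).add ((hquad z).const_mul ((1:ℝ)/2))
  have hfq : ∀ z, HasFDerivAt (fun y => f y - q y) (0 : (Fin D → ℝ) →L[ℝ] ℝ) z := by
    intro z
    have h1 := (hf z).hasFDerivAt.sub (hq' z)
    have heq : fderiv ℝ f z -
        ((∑ j, a j • pr j) +
         (1/2 : ℝ) • ∑ i, ∑ j, c i j • ((z i) • pr j + (z j) • pr i)) = 0 := by
      ext w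
      simp only [ContinuousLinearMap.zero_apply, ContinuousLinearMap.sub_apply,
        ContinuousLinearMap.add_apply, ContinuousLinearMap.sum_apply,
        ContinuousLinearMap.smul_apply, ContinuousLinearMap.proj_apply, smul_eq_mul]
      rw [fderiv_apply_eq_sum]
      simp only [hpd]
      rw [sub_eq_zero]
      have hswap : ∑ i, ∑ j, c i j * (z j * w i) = ∑ i, ∑ j, c i j * (z i * w j) := by
        rw [Finset.sum_comm]
        exact Finset.sum_congr rfl fun i _ => Finset.sum_congr rfl fun j _ => by
          rw [hcs j i]
      have expand : ∑ i, ∑ j, c i j * (z i * w j + z j * w i)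
          = (∑ i, ∑ j, c i j * (z i * w j)) + ∑ i, ∑ j, c i j * (z j * w i) := by
        rw [← Finset.sum_add_distrib]
        exact Finset.sum_congr rfl fun i _ => by
          rw [← Finset.sum_add_distrib]
          exact Finset.sum_congr rfl fun j _ => by ring
      have lhs : ∑ i, w i * (a i + ∑ j, c j i * z j)
          = ∑ i, a i * w i + ∑ i, ∑ j, c j i * (z j * w i) := by
        rw [← Finset.sum_add_distrib]
        refine Finset.sum_congr rfl fun i _ => ?_
        rw [mul_add, Finset.mul_sum]
        congr 1
        · ring
        · exact Finset.sum_congr rfl fun j _ => by ring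
      have hU : ∑ i, ∑ j, c j i * (z j * w i) = ∑ i, ∑ j, c i j * (z i * w j) :=
        Finset.sum_comm
      rw [lhs, expand, hswap, hU]
      ring
    rw [heq] at h1
    exact h1
  have hdiff : Differentiable ℝ (fun y => f y - q y) := fun z => (hfq z).differentiableAt
  have hcon := is_const_of_fderiv_eq_zero hdiff (fun z => (hfq z).fderiv) x 0
  have hq0 : q 0 = 0 := by simp [hq]
  have hqx : q x = ∑ j, a j * x j + (1/2) * ∑ i, ∑ j, c i j * (x i * x j) := rfl
  rw [hq0, hqx] at hcon
  linarith

private lemma alg5 (P : Fin D → Fin D → Fin D → Fin D → Fin D → ℝ)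
    (s12 : ∀ a b c d e, P a b c d e = P b a c d e)
    (s23 : ∀ a b c d e, P a b c d e = P a c b d e)
    (s45 : ∀ a b c d e, P a b c d e = P a b c e d)
    (cyc : ∀ a b c d e, P a b c d e + P a b d e c + P a b e c d = 0) :
    ∀ a b c d e, P a b c d e = 0 := by
  have s13 : ∀ a b c d e, P a b c d e = P c b a d e := by
    intro a b c d e; rw [s12, s23, s12]
  have r1 : ∀ a b c d e, P a b c d e = P c a b d e := by
    intro a b c d e; rw [s13 a b c d e]; exact s23 c b a d e
  have swap : ∀ a b c d e, P a b c d e = P a d e b c := by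
    intro a b c d e
    have I1 := cyc a b c d e
    have I2 := cyc a c b d e
    have I3 := cyc a d b c e
    have I4 := cyc a e b c d
    have e1 : P a c b d e = P a b c d e := s23 a c b d e
    have e2 : P a b d e c = P a b d c e := s45 a b d e c
    have e3 : P a d b c e = P a b d c e := s23 a d b c e
    have e4 : P a c d e b = P a c d b e := s45 a c d e b
    have e5 : P a d c e b = P a c d b e := by rw [s23 a d c e b]; exact s45 a c d e b
    have e6 : P a e b c d = P a b e c d := s23 a e b c d
    have e7 : P a e c d b = P a c e b d := by rw [s23 a e c d b]; exact s45 a c e d b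
    have e8 : P a e d b c = P a d e b c := s23 a e d b c
    linarith
  have exch : ∀ a b c d e, P a b c d e = P a b e d c := by
    intro x y z u v
    calc P x y z u v = P z x y u v := r1 x y z u v
      _ = P z u v x y := swap z x y u v
      _ = P v u z x y := s13 z u v x y
      _ = P v x y u z := swap v u z x y
      _ = P x y v u z := (r1 x y v u z).symm
  have cyc3 : ∀ a b c d e, P a b c d e = P a b d e c := by
    intro x y z u v
    rw [s45 x y z u v]; exact exch x y z v u
  intro a b c d e
  have I := cyc a b c d e
  have t2 := cyc3 a b d e c
  have t3 := cyc3 a b e c d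
  linarith

end Aux

/-- A smooth symmetric rank-2 Killing tensor field on `ℝ^D` (i.e. one satisfying
`∂_α h_{βγ} + ∂_β h_{γα} + ∂_γ h_{αβ} = 0`) has polynomial components of degree at
most `2`. -/
theorem killing_tensor_polynomial (D : ℕ) (hD : 1 ≤ D)
    (h : Fin D → Fin D → (Fin D → ℝ) → ℝ)
    (hsmooth : ∀ α β, ContDiff ℝ (⊤ : ℕ∞) (h α β))
    (hsym : ∀ α β, h α β = h β α)
    (hkill : ∀ α β γ x, pd α (h β γ) x + pd β (h γ α) x + pd γ (h α β) x = 0) :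
    ∀ α β, ∃ P : MvPolynomial (Fin D) ℝ,
      P.totalDegree ≤ 2 ∧ ∀ x, h α β x = MvPolynomial.eval x P := by
  -- smoothness of iterated partials
  have sm1 : ∀ (c d e : Fin D), ContDiff ℝ (⊤ : ℕ∞) (pd c (h d e)) :=
    fun c d e => pd_contDiff (hsmooth d e) c
  have sm2 : ∀ (b c d e : Fin D), ContDiff ℝ (⊤ : ℕ∞) (pd b (pd c (h d e))) :=
    fun b c d e => pd_contDiff (sm1 c d e) b
  -- second-order Killing identity
  have kill2 : ∀ (b c d e : Fin D) (x : Fin D → ℝ),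
      pd b (pd c (h d e)) x + pd b (pd d (h e c)) x + pd b (pd e (h c d)) x = 0 := by
    intro b c d e x
    exact pd_add3 (sm_diff (sm1 c d e)) (sm_diff (sm1 d e c)) (sm_diff (sm1 e c d))
      (fun y => hkill c d e y) b x
  -- third-order Killing identity
  have kill3 : ∀ (a b c d e : Fin D) (x : Fin D → ℝ),
      pd a (pd b (pd c (h d e))) x + pd a (pd b (pd d (h e c))) x
        + pd a (pd b (pd e (h c d))) x = 0 := by
    intro a b c d e x
    exact pd_add3 (sm_diff (sm2 b c d e)) (sm_diff (sm2 b d e c)) (sm_diff (sm2 b e c d))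
      (fun y => kill2 b c d e y) a x
  -- all third partial derivatives vanish
  have third : ∀ (x : Fin D → ℝ) (a b c d e : Fin D),
      pd a (pd b (pd c (h d e))) x = 0 := by
    intro x
    have := alg5 (fun a b c d e => pd a (pd b (pd c (h d e))) x)
      (fun a b c d e => by
        show pd a (pd b (pd c (h d e))) x = pd b (pd a (pd c (h d e))) x
        rw [pd_comm (sm1 c d e) a b])
      (fun a b c d e => by
        show pd a (pd b (pd c (h d e))) x = pd a (pd c (pd b (h d e))) x
        rw [pd_comm (hsmooth d e) b c])
      (fun a b c d e => by
        show pd a (pd b (pd c (h d e))) x = pd a (pd b (pd c (h e d))) x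
        rw [hsym d e])
      (fun a b c d e => kill3 a b c d e x)
    intro a b c d e
    exact this a b c d e
  intro α β
  set f := h α β with hf
  have hfsm : ContDiff ℝ (⊤ : ℕ∞) f := hsmooth α β
  -- second partials are constant
  set c : Fin D → Fin D → ℝ := fun i j => pd i (pd j f) 0 with hc
  have hc2 : ∀ i j x, pd i (pd j f) x = c i j := by
    intro i j x
    exact eq_const_of_pd_eq_zero (sm_diff (sm2 i j α β))
      (fun k y => third y k i j α β) x
  have hcs : ∀ i j, c i j = c j i := by
    intro i j
    rw [hc]
    simp only
    rw [pd_comm hfsm i j]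
  -- first partials are affine
  set a : Fin D → ℝ := fun j => pd j f 0 with ha
  have ha2 : ∀ j x, pd j f x = a j + ∑ i, c i j * x i := by
    intro j x
    have := eq_affine_of_pd (sm_diff (sm1 j α β)) (fun i => c i j)
      (fun i y => hc2 i j y) x
    simpa [ha] using this
  -- f is an explicit quadratic polynomial
  have hfx : ∀ x, f x = f 0 + ∑ j, a j * x j + (1/2) * ∑ i, ∑ j, c i j * (x i * x j) :=
    fun x => eq_quadratic (sm_diff hfsm) a c hcs ha2 x
  -- package as an MvPolynomial
  refine ⟨MvPolynomial.C (f 0) + ∑ j, MvPolynomial.C (a j) * MvPolynomial.X j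
      + MvPolynomial.C ((1:ℝ)/2) *
        ∑ i, ∑ j, MvPolynomial.C (c i j) * (MvPolynomial.X i * MvPolynomial.X j), ?_, ?_⟩
  · refine le_trans (MvPolynomial.totalDegree_add _ _) (max_le ?_ ?_)
    · refine le_trans (MvPolynomial.totalDegree_add _ _) (max_le ?_ ?_)
      · simp [MvPolynomial.totalDegree_C]
      · refine le_trans (MvPolynomial.totalDegree_finset_sum _ _) (Finset.sup_le fun j _ => ?_)
        refine le_trans (MvPolynomial.totalDegree_mul _ _) ?_
        simp [MvPolynomial.totalDegree_C, MvPolynomial.totalDegree_X]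
    · refine le_trans (MvPolynomial.totalDegree_mul _ _) ?_
      rw [MvPolynomial.totalDegree_C]
      refine le_trans (le_of_eq (zero_add _)) ?_
      refine le_trans (MvPolynomial.totalDegree_finset_sum _ _) (Finset.sup_le fun i _ => ?_)
      refine le_trans (MvPolynomial.totalDegree_finset_sum _ _) (Finset.sup_le fun j _ => ?_)
      refine le_trans (MvPolynomial.totalDegree_mul _ _) ?_
      rw [MvPolynomial.totalDegree_C]
      refine le_trans (le_of_eq (zero_add _)) ?_
      refine le_trans (MvPolynomial.totalDegree_mul _ _) ?_
      simp [MvPolynomial.totalDegree_X]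
  · intro x
    rw [hfx x]
    simp [map_sum]
end

section
/- Let D ≥ 1 and let h_{αβ} be a smooth symmetric tensor field on ℝ^D (h_{αβ} = h_{βα}) such that ∂_μ h_{νλ} = ∂_ν h_{μλ} identically on ℝ^D for all indices μ, ν, λ (i.e., the first partial derivatives of h form a totally symmetric array). Then there exists a smooth function f : ℝ^D → ℝ such that h_{αβ} = ∂_α ∂_β f for all α, β. -/
open MeasureTheory Metric intervalIntegral

/-- A continuous linear functional on `ℝ^D` is determined by its values on basis vectors. -/
lemma clm_apply_eq_sum {D : ℕ} (L : (Fin D → ℝ) →L[ℝ] ℝ) (x : Fin D → ℝ) :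
    L x = ∑ ν, x ν * L (Pi.single ν 1) := by
  have hx : x = ∑ ν, (x ν) • (Pi.single ν (1 : ℝ) : Fin D → ℝ) := by
    rw [← Finset.univ_sum_single x]
    refine Finset.sum_congr rfl fun ν _ => ?_
    simp [← Pi.single_smul]
  conv_lhs => rw [hx]
  rw [map_sum]
  simp [smul_eq_mul]

/-- Poincaré lemma for closed smooth 1-forms on `ℝ^D`: if `∂_μ g_ν = ∂_ν g_μ`, then
`g_ν = ∂_ν f` for some smooth `f`. -/
lemma poincare_oneform {D : ℕ} (g : Fin D → (Fin D → ℝ) → ℝ)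
    (hg : ∀ ν, ContDiff ℝ (⊤ : ℕ∞) (g ν))
    (hc : ∀ μ ν x, pd μ (g ν) x = pd ν (g μ) x) :
    ∃ f : (Fin D → ℝ) → ℝ, ContDiff ℝ (⊤ : ℕ∞) f ∧ ∀ ν x, pd ν f x = g ν x := by
  classical
  have hone : (1 : WithTop ℕ∞) ≤ ((⊤ : ℕ∞) : WithTop ℕ∞) := by exact_mod_cast le_top
  have hgc : ∀ ν, Continuous (g ν) := fun ν => (hg ν).continuous
  have hdc : ∀ ν, Continuous (fderiv ℝ (g ν)) := fun ν =>
    ((contDiff_infty_iff_fderiv.mp (hg ν)).2).continuous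
  -- the integrand and its x-derivative
  set F : (Fin D → ℝ) → ℝ → ℝ := fun x t => ∑ ν, x ν * g ν (t • x) with hF
  set F' : (Fin D → ℝ) → ℝ → ((Fin D → ℝ) →L[ℝ] ℝ) := fun x t =>
    ∑ ν, ((x ν) • (t • fderiv ℝ (g ν) (t • x)) +
      (g ν (t • x)) • (ContinuousLinearMap.proj (R := ℝ) (φ := fun _ : Fin D => ℝ) ν)) with hF'
  set f : (Fin D → ℝ) → ℝ := fun x => ∫ t in (0:ℝ)..1, F x t with hfdef
  -- continuity of everything in the pair (x, t)
  have hst : Continuous (fun p : (Fin D → ℝ) × ℝ => p.2 • p.1) :=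
    continuous_snd.smul continuous_fst
  have hFc : Continuous (fun p : (Fin D → ℝ) × ℝ => F p.1 p.2) := by
    apply continuous_finset_sum
    intro ν _
    exact ((continuous_apply ν).comp continuous_fst).mul ((hgc ν).comp hst)
  have hF'c : Continuous (fun p : (Fin D → ℝ) × ℝ => F' p.1 p.2) := by
    apply continuous_finset_sum
    intro ν _
    exact (((continuous_apply ν).comp continuous_fst).smul
        (continuous_snd.smul ((hdc ν).comp hst))).add
      (((hgc ν).comp hst).smul continuous_const)
  -- pointwise derivative of the integrand
  have hF'deriv : ∀ (t : ℝ) (x : Fin D → ℝ), HasFDerivAt (fun y => F y t) (F' x t) x := by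
    intro t x
    apply HasFDerivAt.fun_sum
    intro ν _
    have h1 : HasFDerivAt (fun y : Fin D → ℝ => y ν)
        (ContinuousLinearMap.proj (R := ℝ) (φ := fun _ : Fin D => ℝ) ν) x :=
      hasFDerivAt_apply ν x
    have hsm : HasFDerivAt (fun y : Fin D → ℝ => t • y)
        (t • ContinuousLinearMap.id ℝ (Fin D → ℝ)) x :=
      (ContinuousLinearMap.id ℝ (Fin D → ℝ)).hasFDerivAt.const_smul t
    have h2 : HasFDerivAt (fun y : Fin D → ℝ => g ν (t • y))
        ((fderiv ℝ (g ν) (t • x)).comp (t • ContinuousLinearMap.id ℝ (Fin D → ℝ))) x :=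
      (((hg ν).differentiable (by simp) (t • x)).hasFDerivAt).comp x hsm
    have h2' : (fderiv ℝ (g ν) (t • x)).comp (t • ContinuousLinearMap.id ℝ (Fin D → ℝ)) =
        t • fderiv ℝ (g ν) (t • x) := by
      ext v; simp
    rw [h2'] at h2
    exact h1.mul h2
  -- derivative of the parametric integral at an arbitrary point
  have hfderiv : ∀ x₀ : Fin D → ℝ, HasFDerivAt f (∫ t in (0:ℝ)..1, F' x₀ t) x₀ := by
    intro x₀
    obtain ⟨C, hC⟩ : ∃ C, ∀ p ∈ (closedBall x₀ 1) ×ˢ Set.Icc (0:ℝ) 1,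
        ‖F' p.1 p.2‖ ≤ C :=
      ((isCompact_closedBall x₀ 1).prod isCompact_Icc).exists_bound_of_continuousOn
        hF'c.continuousOn
    apply intervalIntegral.hasFDerivAt_integral_of_dominated_of_fderiv_le
      (F := F) (F' := F') (bound := fun _ => C) (s := ball x₀ 1) (ball_mem_nhds x₀ one_pos)
    · filter_upwards with x
      exact (hFc.comp (Continuous.prodMk_right x)).aestronglyMeasurable.restrict
    · exact (hFc.comp (Continuous.prodMk_right x₀)).intervalIntegrable 0 1
    · exact (hF'c.comp (Continuous.prodMk_right x₀)).aestronglyMeasurable.restrict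
    · filter_upwards with t ht x hx
      rw [Set.uIoc_of_le (by norm_num : (0:ℝ) ≤ 1)] at ht
      exact hC (x, t) ⟨ball_subset_closedBall hx, ⟨ht.1.le, ht.2⟩⟩
    · exact intervalIntegrable_const
    · filter_upwards with t ht x hx
      exact hF'deriv t x
  have hfdiff : Differentiable ℝ f := fun x => (hfderiv x).differentiableAt
  -- compute the action of the derivative on basis vectors
  have hkey : ∀ (x : Fin D → ℝ) (μ : Fin D),
      (∫ t in (0:ℝ)..1, F' x t) (Pi.single μ 1) = g μ x := by
    intro x μ
    have hInt : IntervalIntegrable (fun t => F' x t) volume 0 1 :=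
      (hF'c.comp (Continuous.prodMk_right x)).intervalIntegrable 0 1
    rw [ContinuousLinearMap.intervalIntegral_apply hInt]
    -- the integrand is the derivative of t ↦ t * g μ (t • x)
    have happ : ∀ t : ℝ, (F' x t) (Pi.single μ 1) =
        1 * g μ (t • x) + t * (fderiv ℝ (g μ) (t • x)) x := by
      intro t
      have hexp : (F' x t) (Pi.single μ 1) =
          ∑ ν, (x ν * (t * fderiv ℝ (g ν) (t • x) (Pi.single μ 1)) +
            g ν (t • x) * ((Pi.single μ (1:ℝ) : Fin D → ℝ) ν)) := by
        simp [hF', ContinuousLinearMap.sum_apply, smul_eq_mul]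
      rw [hexp, Finset.sum_add_distrib]
      have hδ : ∑ ν, g ν (t • x) * ((Pi.single μ (1:ℝ) : Fin D → ℝ) ν) = g μ (t • x) := by
        rw [Finset.sum_eq_single μ]
        · simp
        · intro ν _ hν; simp [Pi.single_apply, hν]
        · simp
      rw [hδ]
      have hsum : ∑ ν, x ν * (t * fderiv ℝ (g ν) (t • x) (Pi.single μ 1)) =
          t * (fderiv ℝ (g μ) (t • x)) x := by
        rw [clm_apply_eq_sum (fderiv ℝ (g μ) (t • x)) x, Finset.mul_sum]
        refine Finset.sum_congr rfl fun ν _ => ?_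
        have hcc := hc μ ν (t • x)
        simp only [pd] at hcc
        rw [hcc]; ring
      rw [hsum]; ring
    -- FTC
    have hderiv : ∀ t ∈ Set.uIcc (0:ℝ) 1, HasDerivAt (fun s => s * g μ (s • x))
        ((F' x t) (Pi.single μ 1)) t := by
      intro t _
      rw [happ t]
      have hin : HasDerivAt (fun s : ℝ => g μ (s • x)) ((fderiv ℝ (g μ) (t • x)) x) t := by
        have hsx : HasDerivAt (fun s : ℝ => s • x) x t := by
          simpa using (hasDerivAt_id t).smul_const x
        exact (((hg μ).differentiable (by simp) (t • x)).hasFDerivAt).comp_hasDerivAt t hsx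
      exact (hasDerivAt_id t).mul hin
    have hIntApp : IntervalIntegrable (fun t => (F' x t) (Pi.single μ 1)) volume 0 1 := by
      apply Continuous.intervalIntegrable
      exact (ContinuousLinearMap.apply ℝ ℝ ((Pi.single μ 1 : Fin D → ℝ))).continuous.comp
        (hF'c.comp (Continuous.prodMk_right x))
    rw [intervalIntegral.integral_eq_sub_of_hasDerivAt hderiv hIntApp]
    simp
  -- the full derivative is the smooth 1-form
  have hfd_eq : ∀ x : Fin D → ℝ, fderiv ℝ f x =
      ∑ ν, (g ν x) • (ContinuousLinearMap.proj (R := ℝ) (φ := fun _ : Fin D => ℝ) ν) := by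
    intro x
    have h1 : fderiv ℝ f x = ∫ t in (0:ℝ)..1, F' x t := (hfderiv x).fderiv
    apply ContinuousLinearMap.coe_injective
    apply Module.Basis.ext (Pi.basisFun ℝ (Fin D))
    intro μ
    have hb : (Pi.basisFun ℝ (Fin D)) μ = (Pi.single μ (1:ℝ) : Fin D → ℝ) := by
      simp [Pi.basisFun_apply]
    rw [hb]
    show (fderiv ℝ f x) (Pi.single μ 1) =
      (∑ ν, (g ν x) • (ContinuousLinearMap.proj (R := ℝ) (φ := fun _ : Fin D => ℝ) ν))
        (Pi.single μ 1)
    rw [h1, hkey x μ, ContinuousLinearMap.sum_apply, Finset.sum_eq_single μ]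
    · simp
    · intro ν _ hν; simp [Pi.single_apply, hν]
    · simp
  have hfsmooth : ContDiff ℝ (⊤ : ℕ∞) f := by
    rw [contDiff_infty_iff_fderiv]
    refine ⟨hfdiff, ?_⟩
    have heq : (fderiv ℝ f) = fun x =>
        ∑ ν, (g ν x) • (ContinuousLinearMap.proj (R := ℝ) (φ := fun _ : Fin D => ℝ) ν) :=
      funext hfd_eq
    rw [heq]
    apply ContDiff.sum
    intro ν _
    exact (hg ν).smul contDiff_const
  refine ⟨f, hfsmooth, fun ν x => ?_⟩
  have h1 : fderiv ℝ f x = ∫ t in (0:ℝ)..1, F' x t := (hfderiv x).fderiv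
  simp only [pd]
  rw [h1, hkey x ν]

/-- If the first derivatives of a smooth symmetric tensor field `h_{αβ}` on `ℝ^D`
form a totally symmetric array (`∂_μ h_{νλ} = ∂_ν h_{μλ}`), then `h` is a Hessian:
`h_{αβ} = ∂_α ∂_β f` for some smooth function `f`. -/
theorem symmetric_tensor_is_hessian (D : ℕ) (hD : 1 ≤ D)
    (h : Fin D → Fin D → (Fin D → ℝ) → ℝ)
    (hsmooth : ∀ α β, ContDiff ℝ (⊤ : ℕ∞) (h α β))
    (hsym : ∀ α β, h α β = h β α)
    (hclosed : ∀ μ ν lam x, pd μ (h ν lam) x = pd ν (h μ lam) x) :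
    ∃ f : (Fin D → ℝ) → ℝ, ContDiff ℝ (⊤ : ℕ∞) f ∧
      ∀ α β x, h α β x = pd α (pd β f) x := by
  -- first integration: for each lam, find G lam with ∂_ν (G lam) = h ν lam
  have step1 : ∀ lam : Fin D, ∃ G : (Fin D → ℝ) → ℝ, ContDiff ℝ (⊤ : ℕ∞) G ∧
      ∀ ν x, pd ν G x = h ν lam x :=
    fun lam => poincare_oneform (fun ν => h ν lam) (fun ν => hsmooth ν lam)
      (fun μ ν x => hclosed μ ν lam x)
  choose G hGsmooth hGd using step1
  -- second integration: the 1-form G is closed since h is symmetric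
  obtain ⟨f, hfsmooth, hfd⟩ := poincare_oneform G hGsmooth (by
    intro μ ν x
    rw [hGd ν μ x, hGd μ ν x, hsym μ ν])
  refine ⟨f, hfsmooth, fun α β x => ?_⟩
  have hβ : pd β f = G β := funext (hfd β)
  rw [hβ, hGd β α x]
end

section
/- Let D ≥ 1 and let R_{μναβ} be a smooth tensor field on ℝ^D with the algebraic Riemann symmetries (R_{μναβ} = −R_{νμαβ} = −R_{μνβα} = R_{αβμν} and R_{μναβ} + R_{ναμβ} + R_{αμνβ} = 0) satisfying the second Bianchi identity ∂_λ R_{μναβ} + ∂_μ R_{νλαβ} + ∂_ν R_{λμαβ} = 0 identically on ℝ^D. Define the smooth symmetric field h_{αβ}(x) := ∫₀¹ dt ∫₀^t dt′ t′ Σ_{λ,μ} x^λ x^μ R_{αλβμ}(t′x). Then R_{μναβ} = ∂_μ∂_α h_{νβ} − ∂_ν∂_α h_{μβ} − ∂_μ∂_β h_{να} + ∂_ν∂_β h_{μα} identically on ℝ^D. -/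
namespace Tk
set_option linter.unusedSectionVars false

variable {D : ℕ}

lemma contDiff_pd {f : (Fin D → ℝ) → ℝ} (hf : ContDiff ℝ (⊤:ℕ∞) f) (c : Fin D) :
    ContDiff ℝ (⊤:ℕ∞) (pd c f) := by
  have h1 : ContDiff ℝ (⊤:ℕ∞) (fun x => fderiv ℝ f x) := hf.fderiv_right (by norm_num)
  exact h1.clm_apply contDiff_const

lemma pd_congr {f g : (Fin D → ℝ) → ℝ} (hfg : ∀ y, f y = g y) (c : Fin D) :
    pd c f = pd c g := by rw [funext hfg]

lemma pd_neg' {f g : (Fin D → ℝ) → ℝ} (hfg : ∀ y, f y = - g y) (c : Fin D) (x : Fin D → ℝ) :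
    pd c f x = - pd c g x := by
  rw [pd_congr hfg]; simp [pd, fderiv_neg]

lemma pd_add {f g : (Fin D → ℝ) → ℝ} (hf : DifferentiableAt ℝ f x) (hg : DifferentiableAt ℝ g x)
    (c : Fin D) : pd c (fun y => f y + g y) x = pd c f x + pd c g x := by
  simp [pd, fderiv_fun_add hf hg]

lemma pd_sub {f g : (Fin D → ℝ) → ℝ} (hf : DifferentiableAt ℝ f x) (hg : DifferentiableAt ℝ g x)
    (c : Fin D) : pd c (fun y => f y - g y) x = pd c f x - pd c g x := by
  simp [pd, fderiv_fun_sub hf hg]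

lemma pd_const_mul {f : (Fin D → ℝ) → ℝ} (hf : DifferentiableAt ℝ f x) (a : ℝ)
    (c : Fin D) : pd c (fun y => a * f y) x = a * pd c f x := by
  simp [pd, fderiv_const_mul hf a]

lemma pd_mul {f g : (Fin D → ℝ) → ℝ} (hf : DifferentiableAt ℝ f x) (hg : DifferentiableAt ℝ g x)
    (c : Fin D) : pd c (fun y => f y * g y) x = pd c f x * g x + f x * pd c g x := by
  simp only [pd, fderiv_fun_mul hf hg]
  simp only [ContinuousLinearMap.add_apply, ContinuousLinearMap.smul_apply, smul_eq_mul]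
  ring

lemma pd_finset_sum {ι : Type*} (s : Finset ι) {f : ι → (Fin D → ℝ) → ℝ}
    (hf : ∀ i ∈ s, DifferentiableAt ℝ (f i) x) (c : Fin D) :
    pd c (fun y => ∑ i ∈ s, f i y) x = ∑ i ∈ s, pd c (f i) x := by
  simp [pd, fderiv_fun_sum hf]

lemma pd_coord (l c : Fin D) (x : Fin D → ℝ) :
    pd c (fun y : Fin D → ℝ => y l) x = if c = l then 1 else 0 := by
  have : (fun y : Fin D → ℝ => y l) = (ContinuousLinearMap.proj (R := ℝ) (φ := fun _ : Fin D => ℝ) l) := rfl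
  rw [pd, this, ContinuousLinearMap.fderiv]
  simp [Pi.single_apply, eq_comm]

lemma pd_comp_smul {f : (Fin D → ℝ) → ℝ} (hf : Differentiable ℝ f) (t : ℝ) (c : Fin D)
    (x : Fin D → ℝ) : pd c (fun y => f (t • y)) x = t * pd c f (t • x) := by
  have hA : HasFDerivAt (fun y : Fin D → ℝ => t • y) (t • ContinuousLinearMap.id ℝ (Fin D → ℝ)) x := by
    exact ((ContinuousLinearMap.id ℝ (Fin D → ℝ)).hasFDerivAt).const_smul t
  have h := ((hf (t • x)).hasFDerivAt.comp x hA).fderiv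
  have h2 : (fun y => f (t • y)) = f ∘ (fun y => t • y) := rfl
  show fderiv ℝ (fun y => f (t • y)) x (Pi.single c 1) = _
  rw [h2, h]
  simp [pd]

lemma pd_comm {f : (Fin D → ℝ) → ℝ} (hf : ContDiff ℝ (⊤:ℕ∞) f) (c m : Fin D) (x : Fin D → ℝ) :
    pd c (pd m f) x = pd m (pd c f) x := by
  have hsymm : IsSymmSndFDerivAt ℝ f x := by
    have h2 : ContDiffAt ℝ 2 f x := hf.contDiffAt.of_le (by norm_cast)
    exact ContDiffAt.isSymmSndFDerivAt h2 (by simp)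
  have hd : DifferentiableAt ℝ (fderiv ℝ f) x :=
    ((hf.fderiv_right (m := ((⊤:ℕ∞) : WithTop ℕ∞)) (by norm_num)).differentiable (by simp)) x
  have key : ∀ v w : Fin D → ℝ,
      fderiv ℝ (fun y => fderiv ℝ f y w) x v = fderiv ℝ (fderiv ℝ f) x v w := by
    intro v w
    have : (fun y => fderiv ℝ f y w) = fun y => (fderiv ℝ f y : (Fin D → ℝ) →L[ℝ] ℝ) w := rfl
    rw [this, fderiv_clm_apply hd (differentiableAt_const w)]
    simp
  show fderiv ℝ (pd m f) x (Pi.single c 1) = fderiv ℝ (pd c f) x (Pi.single m 1)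
  have e1 : pd m f = fun y => fderiv ℝ f y (Pi.single m 1) := rfl
  have e2 : pd c f = fun y => fderiv ℝ f y (Pi.single c 1) := rfl
  rw [e1, e2, key, key, hsymm.eq]


variable {D : ℕ}

open MeasureTheory intervalIntegral Set

lemma slice_fderiv {F : ((Fin D → ℝ) × ℝ) → ℝ} (hF : Differentiable ℝ F) (t : ℝ)
    (x : Fin D → ℝ) (v : Fin D → ℝ) :
    fderiv ℝ (fun y => F (y, t)) x v = fderiv ℝ F (x, t) (v, 0) := by
  have hin : HasFDerivAt (fun y : Fin D → ℝ => (y, t))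
      (ContinuousLinearMap.inl ℝ (Fin D → ℝ) ℝ) x := hasFDerivAt_prodMk_left x t
  have hc : HasFDerivAt (fun y : Fin D → ℝ => F (y, t))
      ((fderiv ℝ F (x, t)).comp (ContinuousLinearMap.inl ℝ (Fin D → ℝ) ℝ)) x :=
    ((hF (x, t)).hasFDerivAt.comp x hin)
  rw [hc.fderiv]
  rfl

lemma contDiff_pdslice {F : ((Fin D → ℝ) × ℝ) → ℝ} (hF : ContDiff ℝ (⊤:ℕ∞) F) (c : Fin D) :
    ContDiff ℝ (⊤:ℕ∞) (fun p : (Fin D → ℝ) × ℝ => fderiv ℝ F p (Pi.single c 1, 0)) :=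
  (hF.fderiv_right (m := ((⊤:ℕ∞) : WithTop ℕ∞)) (by norm_num)).clm_apply contDiff_const

lemma clm_intervalIntegral_apply {φ : ℝ → ((Fin D → ℝ) →L[ℝ] ℝ)} (hφ : Continuous φ)
    (v : Fin D → ℝ) :
    (∫ t in (0:ℝ)..1, φ t) v = ∫ t in (0:ℝ)..1, φ t v := by
  rw [intervalIntegral_eq_integral_uIoc, intervalIntegral_eq_integral_uIoc]
  have hint : Integrable φ (volume.restrict (Set.uIoc (0:ℝ) 1)) := by
    rw [uIoc_of_le (by norm_num : (0:ℝ) ≤ 1)]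
    exact (hφ.integrableOn_Ioc)
  rw [ContinuousLinearMap.smul_apply, ContinuousLinearMap.integral_apply hint v]

lemma pd_integral {F : ((Fin D → ℝ) × ℝ) → ℝ} (hF : ContDiff ℝ (⊤:ℕ∞) F) (c : Fin D)
    (x : Fin D → ℝ) :
    pd c (fun y => ∫ t in (0:ℝ)..1, F (y, t)) x
      = ∫ t in (0:ℝ)..1, fderiv ℝ F (x, t) (Pi.single c 1, 0) := by
  have hFd : Differentiable ℝ F := hF.differentiable (by norm_num)
  have hFc : Continuous F := hF.continuous
  have hfc : Continuous (fun p : (Fin D → ℝ) × ℝ => fderiv ℝ F p) :=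
    hF.continuous_fderiv (by norm_num)
  set φ : (Fin D → ℝ) → ℝ → ((Fin D → ℝ) →L[ℝ] ℝ) :=
    fun y t => (fderiv ℝ F (y, t)).comp (ContinuousLinearMap.inl ℝ (Fin D → ℝ) ℝ) with hφdef
  -- compactness bound
  obtain ⟨C, hC⟩ : ∃ C, ∀ p ∈ (Metric.closedBall x 1) ×ˢ (Icc (0:ℝ) 1), ‖fderiv ℝ F p‖ ≤ C := by
    have hK : IsCompact ((Metric.closedBall x 1) ×ˢ (Icc (0:ℝ) 1)) :=
      (isCompact_closedBall x 1).prod isCompact_Icc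
    obtain ⟨C, hC⟩ := hK.exists_bound_of_continuousOn hfc.continuousOn
    exact ⟨C, hC⟩
  have hφcont : ∀ y, Continuous (φ y) := by
    intro y
    apply Continuous.clm_comp _ continuous_const
    exact hfc.comp (Continuous.prodMk_right y)
  have main := intervalIntegral.hasFDerivAt_integral_of_dominated_of_fderiv_le
      (F := fun y t => F (y, t)) (F' := φ) (x₀ := x) (a := (0:ℝ)) (b := 1) (μ := volume)
      (bound := fun _ => C * ‖ContinuousLinearMap.inl ℝ (Fin D → ℝ) ℝ‖)
      (s := Metric.ball x 1) (Metric.ball_mem_nhds x one_pos)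
      (Filter.Eventually.of_forall fun y =>
        ((hFc.comp (Continuous.prodMk_right y)).aestronglyMeasurable))
      ((hFc.comp (Continuous.prodMk_right x)).intervalIntegrable 0 1)
      ((hφcont x).aestronglyMeasurable)
      ?_ (intervalIntegrable_const) ?_
  · have := main.fderiv
    rw [pd, this, clm_intervalIntegral_apply (hφcont x)]
    rfl
  · apply Filter.Eventually.of_forall
    intro t ht y hy
    have hyK : (y, t) ∈ (Metric.closedBall x 1) ×ˢ (Icc (0:ℝ) 1) := by
      constructor
      · exact Metric.ball_subset_closedBall hy
      · rw [uIoc_of_le (by norm_num : (0:ℝ) ≤ 1)] at ht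
        exact ⟨le_of_lt ht.1, ht.2⟩
    calc ‖φ y t‖ ≤ ‖fderiv ℝ F (y, t)‖ * ‖ContinuousLinearMap.inl ℝ (Fin D → ℝ) ℝ‖ :=
          ContinuousLinearMap.opNorm_comp_le _ _
      _ ≤ C * ‖ContinuousLinearMap.inl ℝ (Fin D → ℝ) ℝ‖ :=
          mul_le_mul_of_nonneg_right (hC _ hyK) (norm_nonneg _)
  · apply Filter.Eventually.of_forall
    intro t ht y hy
    exact ((hFd (y, t)).hasFDerivAt.comp y (hasFDerivAt_prodMk_left y t))

lemma pd_slice_eq {F : ((Fin D → ℝ) × ℝ) → ℝ} (hF : ContDiff ℝ (⊤:ℕ∞) F) (c : Fin D)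
    (t : ℝ) (x : Fin D → ℝ) :
    pd c (fun y => F (y, t)) x = fderiv ℝ F (x, t) (Pi.single c 1, 0) :=
  slice_fderiv (hF.differentiable (by norm_num)) t x _

lemma pd_integral' {F : ((Fin D → ℝ) × ℝ) → ℝ} (hF : ContDiff ℝ (⊤:ℕ∞) F) (c : Fin D)
    (x : Fin D → ℝ) :
    pd c (fun y => ∫ t in (0:ℝ)..1, F (y, t)) x
      = ∫ t in (0:ℝ)..1, pd c (fun y => F (y, t)) x := by
  rw [pd_integral hF c x]
  apply intervalIntegral.integral_congr
  intro t _
  exact (pd_slice_eq hF c t x).symm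

lemma cont_pd_slice {F : ((Fin D → ℝ) × ℝ) → ℝ} (hF : ContDiff ℝ (⊤:ℕ∞) F) (c : Fin D)
    (x : Fin D → ℝ) :
    Continuous (fun t => pd c (fun y => F (y, t)) x) := by
  have : (fun t => pd c (fun y => F (y, t)) x)
      = fun t => fderiv ℝ F (x, t) (Pi.single c 1, 0) := by
    funext t; exact pd_slice_eq hF c t x
  rw [this]
  exact ((contDiff_pdslice hF c).continuous).comp (Continuous.prodMk_right x)

section gT

variable (T : Fin D → Fin D → (Fin D → ℝ) → ℝ) (hT : ∀ l r, ContDiff ℝ (⊤:ℕ∞) (T l r))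

lemma diff_coord (l : Fin D) : Differentiable ℝ (fun y : Fin D → ℝ => y l) :=
  (ContinuousLinearMap.proj (R := ℝ) (φ := fun _ : Fin D => ℝ) l).differentiable

lemma diff_comp_smul {f : (Fin D → ℝ) → ℝ} (hf : Differentiable ℝ f) (t : ℝ) :
    Differentiable ℝ (fun y : Fin D → ℝ => f (t • y)) := by
  apply hf.comp
  exact (differentiable_id.const_smul t)

include hT in
lemma diff_lin (t : ℝ) (S : Fin D → Fin D → (Fin D → ℝ) → ℝ)
    (hS : ∀ c r, Differentiable ℝ (S c r)) (c : Fin D) :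
    Differentiable ℝ (fun z : Fin D → ℝ => ∑ r : Fin D, z r * S c r (t • z)) := by
  apply Differentiable.fun_sum
  intro r _
  exact (diff_coord r).fun_mul (diff_comp_smul (hS c r) t)

include hT in
lemma diff_gT (t : ℝ) : Differentiable ℝ (fun z : Fin D → ℝ =>
    ∑ l : Fin D, ∑ r : Fin D, z l * z r * T l r (t • z)) := by
  apply Differentiable.fun_sum; intro l _
  apply Differentiable.fun_sum; intro r _
  exact ((diff_coord l).fun_mul (diff_coord r)).fun_mul (diff_comp_smul ((hT l r).differentiable (by norm_num)) t)

include hT in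
lemma pd_lin (t : ℝ) (c m : Fin D) (x : Fin D → ℝ) :
    pd m (fun z : Fin D → ℝ => ∑ r : Fin D, z r * T c r (t • z)) x
      = T c m (t • x) + t * ∑ r : Fin D, x r * pd m (T c r) (t • x) := by
  have hdT : ∀ l r, Differentiable ℝ (T l r) := fun l r => (hT l r).differentiable (by norm_num)
  rw [pd_finset_sum Finset.univ (fun r _ =>
    ((diff_coord r).fun_mul (diff_comp_smul (hdT c r) t)).differentiableAt) m]
  have : ∀ r : Fin D, pd m (fun z => z r * T c r (t • z)) x
      = (if m = r then 1 else 0) * T c r (t • x) + x r * (t * pd m (T c r) (t • x)) := by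
    intro r
    rw [pd_mul (diff_coord r).differentiableAt (diff_comp_smul (hdT c r) t).differentiableAt,
      pd_coord, pd_comp_smul (hdT c r) t]
  rw [Finset.sum_congr rfl (fun r _ => this r)]
  rw [Finset.sum_add_distrib]
  congr 1
  · simp [ite_mul]
  · rw [Finset.mul_sum]
    apply Finset.sum_congr rfl
    intro r _
    ring

include hT in
lemma pd_gT (t : ℝ) (c : Fin D) (x : Fin D → ℝ) :
    pd c (fun z : Fin D → ℝ => ∑ l : Fin D, ∑ r : Fin D, z l * z r * T l r (t • z)) x
      = (∑ r : Fin D, x r * T c r (t • x)) + (∑ l : Fin D, x l * T l c (t • x))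
        + t * ∑ l : Fin D, ∑ r : Fin D, x l * x r * pd c (T l r) (t • x) := by
  have hdT : ∀ l r, Differentiable ℝ (T l r) := fun l r => (hT l r).differentiable (by norm_num)
  rw [pd_finset_sum Finset.univ (fun l _ => by
    exact (Differentiable.fun_sum (fun r _ =>
      ((diff_coord l).fun_mul (diff_coord r)).fun_mul (diff_comp_smul (hdT l r) t))).differentiableAt) c]
  have hterm : ∀ l r : Fin D, pd c (fun z => z l * z r * T l r (t • z)) x
      = ((if c = l then 1 else 0) * x r + x l * (if c = r then 1 else 0)) * T l r (t • x)
        + x l * x r * (t * pd c (T l r) (t • x)) := by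
    intro l r
    rw [pd_mul ((diff_coord l).fun_mul (diff_coord r)).differentiableAt
        (diff_comp_smul (hdT l r) t).differentiableAt,
      pd_mul (diff_coord l).differentiableAt (diff_coord r).differentiableAt,
      pd_coord, pd_coord, pd_comp_smul (hdT l r) t]
  have hinner : ∀ l : Fin D, pd c (fun z => ∑ r : Fin D, z l * z r * T l r (t • z)) x
      = ∑ r : Fin D, (((if c = l then 1 else 0) * x r + x l * (if c = r then 1 else 0)) * T l r (t • x)
        + x l * x r * (t * pd c (T l r) (t • x))) := by
    intro l
    rw [pd_finset_sum Finset.univ (fun r _ =>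
      (((diff_coord l).fun_mul (diff_coord r)).fun_mul (diff_comp_smul (hdT l r) t)).differentiableAt) c]
    exact Finset.sum_congr rfl (fun r _ => hterm l r)
  rw [Finset.sum_congr rfl (fun l _ => hinner l)]
  have expand : ∀ l r : Fin D,
      (((if c = l then 1 else 0) * x r + x l * (if c = r then 1 else 0)) * T l r (t • x)
        + x l * x r * (t * pd c (T l r) (t • x)))
      = (if c = l then 1 else 0) * (x r * T l r (t • x))
        + (if c = r then 1 else 0) * (x l * T l r (t • x))
        + t * (x l * x r * pd c (T l r) (t • x)) := by
    intro l r; ring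
  rw [Finset.sum_congr rfl (fun l _ => Finset.sum_congr rfl (fun r _ => expand l r))]
  have : ∀ l : Fin D, ∑ r : Fin D,
      ((if c = l then 1 else 0) * (x r * T l r (t • x))
        + (if c = r then 1 else 0) * (x l * T l r (t • x))
        + t * (x l * x r * pd c (T l r) (t • x)))
      = ((if c = l then 1 else 0) * ∑ r : Fin D, x r * T l r (t • x))
        + x l * T l c (t • x)
        + t * ∑ r : Fin D, (x l * x r * pd c (T l r) (t • x)) := by
    intro l
    rw [Finset.sum_add_distrib, Finset.sum_add_distrib]
    congr 1
    · congr 1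
      · rw [Finset.mul_sum]
      · simp [ite_mul, eq_comm]
    · rw [Finset.mul_sum]
  rw [Finset.sum_congr rfl (fun l _ => this l)]
  rw [Finset.sum_add_distrib, Finset.sum_add_distrib]
  rw [← Finset.mul_sum]
  congr 1
  congr 1
  · simp [ite_mul]

end gT

lemma contDiff_gT (T : Fin D → Fin D → (Fin D → ℝ) → ℝ)
    (hT : ∀ l r, ContDiff ℝ (⊤:ℕ∞) (T l r)) (t : ℝ) :
    ContDiff ℝ (⊤:ℕ∞) (fun z : Fin D → ℝ => ∑ l : Fin D, ∑ r : Fin D, z l * z r * T l r (t • z)) := by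
  apply ContDiff.sum; intro l _
  apply ContDiff.sum; intro r _
  have hproj : ∀ i : Fin D, ContDiff ℝ (⊤:ℕ∞) (fun z : Fin D → ℝ => z i) := fun i =>
    (ContinuousLinearMap.proj (R := ℝ) (φ := fun _ : Fin D => ℝ) i).contDiff
  exact ((hproj l).mul (hproj r)).mul ((hT l r).comp (contDiff_id.const_smul t))

lemma pd_lin2 (t : ℝ) (S : Fin D → (Fin D → ℝ) → ℝ)
    (hS : ∀ r, ContDiff ℝ (⊤:ℕ∞) (S r)) (m : Fin D) (x : Fin D → ℝ) :
    pd m (fun z : Fin D → ℝ => ∑ r : Fin D, z r * S r (t • z)) x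
      = S m (t • x) + t * ∑ r : Fin D, x r * pd m (S r) (t • x) := by
  have hdS : ∀ r, Differentiable ℝ (S r) := fun r => (hS r).differentiable (by norm_num)
  rw [pd_finset_sum Finset.univ (fun r _ =>
    ((diff_coord r).fun_mul (diff_comp_smul (hdS r) t)).differentiableAt) m]
  have : ∀ r : Fin D, pd m (fun z => z r * S r (t • z)) x
      = (if m = r then 1 else 0) * S r (t • x) + x r * (t * pd m (S r) (t • x)) := by
    intro r
    rw [pd_mul (diff_coord r).differentiableAt (diff_comp_smul (hdS r) t).differentiableAt,
      pd_coord, pd_comp_smul (hdS r) t]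
  rw [Finset.sum_congr rfl (fun r _ => this r), Finset.sum_add_distrib]
  congr 1
  · simp [ite_mul]
  · rw [Finset.mul_sum]
    exact Finset.sum_congr rfl (fun r _ => by ring)

lemma pd_pd_gT (T : Fin D → Fin D → (Fin D → ℝ) → ℝ)
    (hT : ∀ l r, ContDiff ℝ (⊤:ℕ∞) (T l r)) (t : ℝ) (c m : Fin D) (x : Fin D → ℝ) :
    pd m (pd c (fun z : Fin D → ℝ => ∑ l : Fin D, ∑ r : Fin D, z l * z r * T l r (t • z))) x
      = (T c m (t • x) + t * ∑ r : Fin D, x r * pd m (T c r) (t • x))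
        + (T m c (t • x) + t * ∑ l : Fin D, x l * pd m (T l c) (t • x))
        + t * ((∑ r : Fin D, x r * pd c (T m r) (t • x))
          + (∑ l : Fin D, x l * pd c (T l m) (t • x))
          + t * ∑ l : Fin D, ∑ r : Fin D, x l * x r * pd m (pd c (T l r)) (t • x)) := by
  have hdT : ∀ l r, Differentiable ℝ (T l r) := fun l r => (hT l r).differentiable (by norm_num)
  have hpdT : ∀ l r, ContDiff ℝ (⊤:ℕ∞) (pd c (T l r)) := fun l r => contDiff_pd (hT l r) c
  have h1 : ∀ z, pd c (fun z : Fin D → ℝ =>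
        ∑ l : Fin D, ∑ r : Fin D, z l * z r * T l r (t • z)) z
      = (fun z => (∑ r : Fin D, z r * T c r (t • z)) + (∑ l : Fin D, z l * T l c (t • z))
        + t * ∑ l : Fin D, ∑ r : Fin D, z l * z r * pd c (T l r) (t • z)) z :=
    fun z => pd_gT T hT t c z
  rw [pd_congr h1 m]
  have dA : Differentiable ℝ (fun z : Fin D → ℝ => ∑ r : Fin D, z r * T c r (t • z)) :=
    Differentiable.fun_sum (fun r _ => (diff_coord r).fun_mul (diff_comp_smul (hdT c r) t))
  have dB : Differentiable ℝ (fun z : Fin D → ℝ => ∑ l : Fin D, z l * T l c (t • z)) :=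
    Differentiable.fun_sum (fun l _ => (diff_coord l).fun_mul (diff_comp_smul (hdT l c) t))
  have dC : Differentiable ℝ (fun z : Fin D → ℝ =>
      ∑ l : Fin D, ∑ r : Fin D, z l * z r * pd c (T l r) (t • z)) := diff_gT _ hpdT t
  have e1 : pd m (fun z : Fin D → ℝ =>
      ((∑ r : Fin D, z r * T c r (t • z)) + (∑ l : Fin D, z l * T l c (t • z))
        + t * ∑ l : Fin D, ∑ r : Fin D, z l * z r * pd c (T l r) (t • z))) x
      = pd m (fun z => (∑ r : Fin D, z r * T c r (t • z)) + (∑ l : Fin D, z l * T l c (t • z))) x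
        + pd m (fun z => t * ∑ l : Fin D, ∑ r : Fin D, z l * z r * pd c (T l r) (t • z)) x :=
    pd_add (dA.add dB).differentiableAt ((dC.const_mul t)).differentiableAt m
  rw [e1, pd_add dA.differentiableAt dB.differentiableAt m,
    pd_const_mul dC.differentiableAt t m,
    pd_lin2 t (fun r => T c r) (fun r => hT c r) m x,
    pd_lin2 t (fun l => T l c) (fun l => hT l c) m x,
    pd_gT (fun l r => pd c (T l r)) hpdT t m x]

lemma fderiv_apply_eq_sum {f : (Fin D → ℝ) → ℝ} (hf : DifferentiableAt ℝ f y)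
    (x : Fin D → ℝ) : fderiv ℝ f y x = ∑ r : Fin D, x r * pd r f y := by
  have hx : x = ∑ r : Fin D, x r • (Pi.single r 1 : Fin D → ℝ) := by
    ext j
    rw [Finset.sum_apply]
    simp [Pi.single_apply]
  conv_lhs => rw [hx]
  rw [map_sum]
  exact Finset.sum_congr rfl (fun r _ => by rw [ContinuousLinearMap.map_smul]; simp [pd])

lemma hasDerivAt_comp_smul {f : (Fin D → ℝ) → ℝ} (hf : ContDiff ℝ (⊤:ℕ∞) f)
    (x : Fin D → ℝ) (t : ℝ) :
    HasDerivAt (fun s : ℝ => f (s • x)) (∑ r : Fin D, x r * pd r f (t • x)) t := by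
  have h1 : HasDerivAt (fun s : ℝ => s • x) ((1:ℝ) • x) t := (hasDerivAt_id t).smul_const x
  rw [one_smul] at h1
  have h2 := ((hf.differentiable (by norm_num)) (t • x)).hasFDerivAt.comp_hasDerivAt t h1
  rwa [fderiv_apply_eq_sum ((hf.differentiable (by norm_num)) (t • x)) x] at h2

lemma double_to_single (J : ℝ → ℝ) (hJ : Continuous J) :
    (∫ t in (0:ℝ)..1, ∫ s in (0:ℝ)..t, s * J s) = ∫ t in (0:ℝ)..1, (t - t^2) * J t := by
  have hG : Continuous (fun s : ℝ => s * J s) := continuous_id.mul hJ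
  set Φ : ℝ → ℝ := fun u => ∫ s in (0:ℝ)..u, s * J s with hΦdef
  have hΦ : ∀ u ∈ Set.uIcc (0:ℝ) 1, HasDerivAt Φ (u * J u) u := by
    intro u _
    exact intervalIntegral.integral_hasDerivAt_right (hG.intervalIntegrable 0 u)
      (hG.stronglyMeasurable.stronglyMeasurableAtFilter) hG.continuousAt
  have hid : ∀ u ∈ Set.uIcc (0:ℝ) 1, HasDerivAt (fun s : ℝ => s) 1 u := fun u _ => hasDerivAt_id u
  have hIBP := intervalIntegral.integral_mul_deriv_eq_deriv_mul hΦ hid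
    (hG.intervalIntegrable 0 1) (intervalIntegrable_const)
  have h0 : Φ 0 = 0 := intervalIntegral.integral_same
  simp only [mul_one, h0, zero_mul, sub_zero, id] at hIBP
  rw [hIBP]
  have hPhi1 : Φ 1 = ∫ s in (0:ℝ)..1, s * J s := rfl
  rw [hPhi1, ← intervalIntegral.integral_sub (hG.intervalIntegrable 0 1)
    ((hG.fun_mul continuous_id').intervalIntegrable 0 1)]
  exact intervalIntegral.integral_congr (fun u _ => by ring)

lemma pd_comb3 {f g1 g2 g3 : (Fin D → ℝ) → ℝ} (h1 : Differentiable ℝ g1)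
    (h2 : Differentiable ℝ g2) (h3 : Differentiable ℝ g3) (c1 c2 c3 : ℝ)
    (hf : ∀ y, f y = c1 * g1 y + c2 * g2 y + c3 * g3 y) (e : Fin D) (x : Fin D → ℝ) :
    pd e f x = c1 * pd e g1 x + c2 * pd e g2 x + c3 * pd e g3 x := by
  have hfg : ∀ y, f y = (fun y => (c1 * g1 y + c2 * g2 y) + c3 * g3 y) y := fun y =>
    (hf y).trans (by ring)
  rw [pd_congr hfg e,
    pd_add ((h1.const_mul c1).fun_add (h2.const_mul c2)).differentiableAt
      (h3.const_mul c3).differentiableAt e,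
    pd_add (h1.const_mul c1).differentiableAt (h2.const_mul c2).differentiableAt e,
    pd_const_mul h1.differentiableAt c1 e, pd_const_mul h2.differentiableAt c2 e,
    pd_const_mul h3.differentiableAt c3 e]


end Tk

open Tk in
/-- Explicit homotopy formula: if `R_{μναβ}` is a smooth tensor field on `ℝ^D` with
the algebraic Riemann symmetries satisfying the second Bianchi identity, then the
potential `h_{αβ}(x) = ∫₀¹ dt ∫₀ᵗ dt' t' Σ_{λμ} x^λ x^μ R_{αλβμ}(t'x)` satisfies
`R_{μναβ} = ∂_μ∂_α h_{νβ} − ∂_ν∂_α h_{μβ} − ∂_μ∂_β h_{να} + ∂_ν∂_β h_{μα}`. -/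
theorem riemann_homotopy_formula (D : ℕ) (hD : 1 ≤ D)
    (R : Fin D → Fin D → Fin D → Fin D → (Fin D → ℝ) → ℝ)
    (hsmooth : ∀ μ ν α β, ContDiff ℝ (⊤ : ℕ∞) (R μ ν α β))
    (hanti1 : ∀ μ ν α β x, R μ ν α β x = - R ν μ α β x)
    (hanti2 : ∀ μ ν α β x, R μ ν α β x = - R μ ν β α x)
    (hpair : ∀ μ ν α β x, R μ ν α β x = R α β μ ν x)
    (hcyclic : ∀ μ ν α β x, R μ ν α β x + R ν α μ β x + R α μ ν β x = 0)
    (hbianchi : ∀ lam μ ν α β x,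
      pd lam (R μ ν α β) x + pd μ (R ν lam α β) x + pd ν (R lam μ α β) x = 0)
    (h : Fin D → Fin D → (Fin D → ℝ) → ℝ)
    (hh : ∀ α β x, h α β x =
      ∫ t in (0:ℝ)..1, ∫ t' in (0:ℝ)..t,
        t' * ∑ lam : Fin D, ∑ μ : Fin D, x lam * x μ * R α lam β μ (t' • x)) :
    ∀ μ ν α β x,
      R μ ν α β x = pd μ (pd α (h ν β)) x - pd ν (pd α (h μ β)) x
        - pd μ (pd β (h ν α)) x + pd ν (pd β (h μ α)) x := by
  intro μ ν α β x
  have hRd : ∀ a b c d, Differentiable ℝ (R a b c d) :=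
    fun a b c d => (hsmooth a b c d).differentiable (by norm_num)
  have hRc : ∀ a b c d, Continuous (R a b c d) := fun a b c d => (hsmooth a b c d).continuous
  -- ## The algebraic value identities
  have keyv : ∀ a b c d w, R a b c d w - R a c b d w = R c b a d w := by
    intro a b c d w
    have h1 := hcyclic a b c d w
    have h2 := hanti1 c a b d w
    have h3 := hanti1 b c a d w
    linarith
  have hI1v : ∀ m n b r w, R n m b r w = -R n r b m w - 2*R m n b r w + R m r b n w := by
    intro m n b r w
    have h1 := hcyclic m n r b w
    have h2 := hanti2 m n r b w
    have h3 := hanti2 n r m b w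
    have h4 := hanti2 r m n b w
    have h5 := hanti1 r m b n w
    have h6 := hanti1 n m b r w
    linarith
  have hBv : ∀ n a b r w, R n a b r w = 2*R n r b a w + R n b a r w + R n r a b w := by
    intro n a b r w
    have h1 := hpair n a b r w
    have h2 := hpair n b a r w
    have h3 := hanti1 b r n a w
    have h4 := hanti1 a r n b w
    have h5 := keyv r a n b w
    have h6 := hpair r b n a w
    have h7 := hanti1 r n a b w
    have h8 := hanti2 n r a b w
    linarith
  have hZv : ∀ w, R ν α β μ w + R ν μ β α w - R μ α β ν w - R μ ν β α w
      - R ν β α μ w - R ν μ α β w + R μ β α ν w + R μ ν α β w = 6 * R μ ν α β w := by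
    intro w
    have p1 := hpair ν α β μ w
    have p2 := hpair μ α β ν w
    have p3 := hpair ν β α μ w
    have p4 := hpair μ β α ν w
    have k1 := keyv β μ ν α w
    have k2 := keyv α μ ν β w
    have a1 := hanti1 ν μ β α w
    have a2 := hanti2 μ ν β α w
    have a3 := hanti1 ν μ α β w
    have a4 := hanti2 ν μ β α w
    have a5 := hanti1 μ ν β α w
    linarith
  -- ## pd-level identities
  have pdI1 : ∀ e m n b r (w : Fin D → ℝ), pd e (R n m b r) w
      = -pd e (R n r b m) w - 2*pd e (R m n b r) w + pd e (R m r b n) w := by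
    intro e m n b r w
    exact pd_comb3 (hRd n r b m) (hRd m n b r) (hRd m r b n) (-1) (-2) 1
      (fun y => by have := hI1v m n b r y; linarith) e w |>.trans (by ring)
  have pdBv : ∀ e n a b r (w : Fin D → ℝ), pd e (R n a b r) w
      = 2*pd e (R n r b a) w + pd e (R n b a r) w + pd e (R n r a b) w := by
    intro e n a b r w
    exact pd_comb3 (hRd n r b a) (hRd n b a r) (hRd n r a b) 2 1 1
      (fun y => by have := hBv n a b r y; linarith) e w |>.trans (by ring)
  have pdL1 : ∀ m n l c d (w : Fin D → ℝ),
      pd m (R n l c d) w - pd n (R m l c d) w = - pd l (R m n c d) w := by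
    intro m n l c d w
    have hb := hbianchi l m n c d w
    have hneg : pd n (R l m c d) w = - pd n (R m l c d) w :=
      pd_neg' (fun y => hanti1 l m c d y) n w
    linarith
  have pdV : ∀ r (w : Fin D → ℝ),
      pd β (R μ ν α r) w - pd α (R μ ν β r) w - pd r (R μ ν α β) w = 0 := by
    intro r w
    have hb := hbianchi β α r μ ν w
    have e1 : pd β (R α r μ ν) w = pd β (R μ ν α r) w := by
      rw [pd_congr (fun y => (hpair μ ν α r y).symm) β]
    have e2 : pd α (R r β μ ν) w = - pd α (R μ ν β r) w := by
      refine pd_neg' (fun y => ?_) α w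
      rw [hanti1 r β μ ν y, ← hpair μ ν β r y]
    have e3 : pd r (R β α μ ν) w = - pd r (R μ ν α β) w := by
      refine pd_neg' (fun y => ?_) r w
      rw [hanti1 β α μ ν y, ← hpair μ ν α β y]
    linarith
  have hAlgOr : ∀ r (w : Fin D → ℝ),
      pd μ (R ν α β r) w + pd μ (R ν r β α) w + pd α (R ν μ β r) w + pd α (R ν r β μ) w
      - pd ν (R μ α β r) w - pd ν (R μ r β α) w - pd α (R μ ν β r) w - pd α (R μ r β ν) w
      - pd μ (R ν β α r) w - pd μ (R ν r α β) w - pd β (R ν μ α r) w - pd β (R ν r α μ) w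
      + pd ν (R μ β α r) w + pd ν (R μ r α β) w + pd β (R μ ν α r) w + pd β (R μ r α ν) w
      = 6 * pd r (R μ ν α β) w := by
    intro r w
    have g1 := pdI1 α μ ν β r w
    have g2 := pdI1 β μ ν α r w
    have g3 := pdBv μ ν α β r w
    have g4 := pdBv ν μ α β r w
    have g5 := pdL1 μ ν r β α w
    have g6 := pdV r w
    have g7 : pd r (R μ ν β α) w = - pd r (R μ ν α β) w :=
      pd_neg' (fun y => hanti2 μ ν β α y) r w
    linarith
  have hAlgW : ∀ l r (w : Fin D → ℝ),
      pd μ (pd α (R ν l β r)) w - pd ν (pd α (R μ l β r)) w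
      - pd μ (pd β (R ν l α r)) w + pd ν (pd β (R μ l α r)) w
      = pd l (pd r (R μ ν α β)) w := by
    intro l r w
    have dpd : ∀ a b c d (e : Fin D), Differentiable ℝ (pd e (R a b c d)) :=
      fun a b c d e => (contDiff_pd (hsmooth a b c d) e).differentiable (by norm_num)
    have c1 : pd μ (pd α (R ν l β r)) w = pd α (pd μ (R ν l β r)) w :=
      pd_comm (hsmooth ν l β r) μ α w
    have c2 : pd ν (pd α (R μ l β r)) w = pd α (pd ν (R μ l β r)) w :=
      pd_comm (hsmooth μ l β r) ν α w
    have c3 : pd μ (pd β (R ν l α r)) w = pd β (pd μ (R ν l α r)) w :=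
      pd_comm (hsmooth ν l α r) μ β w
    have c4 : pd ν (pd β (R μ l α r)) w = pd β (pd ν (R μ l α r)) w :=
      pd_comm (hsmooth μ l α r) ν β w
    have d1 : pd α (pd μ (R ν l β r)) w
        = pd α (pd ν (R μ l β r)) w - pd α (pd l (R μ ν β r)) w := by
      have hfun : ∀ y, pd μ (R ν l β r) y
          = (fun y => pd ν (R μ l β r) y - pd l (R μ ν β r) y) y := fun y => by
        have := pdL1 μ ν l β r y; simp only []; linarith
      rw [pd_congr hfun α]
      exact pd_sub (dpd μ l β r ν).differentiableAt (dpd μ ν β r l).differentiableAt α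
    have d2 : pd β (pd μ (R ν l α r)) w
        = pd β (pd ν (R μ l α r)) w - pd β (pd l (R μ ν α r)) w := by
      have hfun : ∀ y, pd μ (R ν l α r) y
          = (fun y => pd ν (R μ l α r) y - pd l (R μ ν α r) y) y := fun y => by
        have := pdL1 μ ν l α r y; simp only []; linarith
      rw [pd_congr hfun β]
      exact pd_sub (dpd μ l α r ν).differentiableAt (dpd μ ν α r l).differentiableAt β
    have e1 : pd α (pd l (R μ ν β r)) w = pd l (pd α (R μ ν β r)) w :=
      pd_comm (hsmooth μ ν β r) α l w
    have e2 : pd β (pd l (R μ ν α r)) w = pd l (pd β (R μ ν α r)) w :=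
      pd_comm (hsmooth μ ν α r) β l w
    have f1 : pd l (pd β (R μ ν α r)) w - pd l (pd α (R μ ν β r)) w
        = pd l (pd r (R μ ν α β)) w := by
      have hfun : ∀ y, pd r (R μ ν α β) y
          = (fun y => pd β (R μ ν α r) y - pd α (R μ ν β r) y) y := fun y => by
        have := pdV r y; simp only []; linarith
      rw [pd_congr hfun l]
      exact (pd_sub (dpd μ ν α r β).differentiableAt (dpd μ ν β r α).differentiableAt l).symm
    linarith
  -- ## Q and step 1
  have hQs : ∀ a b, ContDiff ℝ (⊤:ℕ∞) (fun p : (Fin D → ℝ) × ℝ =>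
      (p.2 - p.2^2) * ∑ l : Fin D, ∑ r : Fin D, p.1 l * p.1 r * R a l b r (p.2 • p.1)) := by
    intro a b
    apply ContDiff.mul
    · exact contDiff_snd.sub (contDiff_snd.pow 2)
    · apply ContDiff.sum; intro l _
      apply ContDiff.sum; intro r _
      have hproj : ∀ i : Fin D, ContDiff ℝ (⊤:ℕ∞) (fun p : (Fin D → ℝ) × ℝ => p.1 i) := fun i =>
        ((ContinuousLinearMap.proj (R := ℝ) (φ := fun _ : Fin D => ℝ) i).contDiff).comp contDiff_fst
      exact ((hproj l).mul (hproj r)).mul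
        ((hsmooth a l b r).comp (contDiff_snd.smul contDiff_fst))
  have hstep1 : ∀ a b, h a b = fun y => ∫ t in (0:ℝ)..1,
      (t - t^2) * ∑ l : Fin D, ∑ r : Fin D, y l * y r * R a l b r (t • y) := by
    intro a b; funext y
    rw [hh]
    have hJ : Continuous (fun s : ℝ =>
        ∑ l : Fin D, ∑ r : Fin D, y l * y r * R a l b r (s • y)) := by
      apply continuous_finset_sum; intro l _
      apply continuous_finset_sum; intro r _
      exact continuous_const.mul ((hRc a l b r).comp (continuous_id.smul continuous_const))
    exact double_to_single _ hJ
  -- ## representation of second derivatives as integrals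
  have hrep : ∀ a b c m, pd m (pd c (h a b)) x
      = ∫ t in (0:ℝ)..1, pd m (pd c (fun z => (t - t^2)
          * ∑ l : Fin D, ∑ r : Fin D, z l * z r * R a l b r (t • z))) x := by
    intro a b c m
    have e1 : ∀ z, pd c (h a b) z
        = (fun z => ∫ t in (0:ℝ)..1, (fun p : (Fin D → ℝ) × ℝ =>
            fderiv ℝ (fun p : (Fin D → ℝ) × ℝ => (p.2 - p.2^2)
              * ∑ l : Fin D, ∑ r : Fin D, p.1 l * p.1 r * R a l b r (p.2 • p.1)) p
              (Pi.single c 1, 0)) (z, t)) z := by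
      intro z
      rw [hstep1 a b]
      exact pd_integral (hQs a b) c z
    rw [pd_congr e1 m]
    rw [pd_integral' (contDiff_pdslice (hQs a b) c) m x]
    apply intervalIntegral.integral_congr
    intro t _
    show pd m (fun y : Fin D → ℝ => fderiv ℝ (fun p : (Fin D → ℝ) × ℝ => (p.2 - p.2^2)
          * ∑ l : Fin D, ∑ r : Fin D, p.1 l * p.1 r * R a l b r (p.2 • p.1)) (y, t)
          (Pi.single c 1, 0)) x
        = pd m (pd c (fun z : Fin D → ℝ => (t - t^2)
            * ∑ l : Fin D, ∑ r : Fin D, z l * z r * R a l b r (t • z))) x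
    have e2 : ∀ yy, (fun y : Fin D → ℝ => fderiv ℝ (fun p : (Fin D → ℝ) × ℝ => (p.2 - p.2^2)
          * ∑ l : Fin D, ∑ r : Fin D, p.1 l * p.1 r * R a l b r (p.2 • p.1)) (y, t)
          (Pi.single c 1, 0)) yy
        = (pd c (fun z : Fin D → ℝ => (t - t^2)
            * ∑ l : Fin D, ∑ r : Fin D, z l * z r * R a l b r (t • z))) yy := by
      intro yy
      exact (pd_slice_eq (hQs a b) c t yy).symm
    exact congrFun (pd_congr e2 m) x
  -- ## continuity of the integrands
  have hcontN : ∀ a b c m, Continuous (fun t => pd m (pd c (fun z => (t - t^2)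
      * ∑ l : Fin D, ∑ r : Fin D, z l * z r * R a l b r (t • z))) x) := by
    intro a b c m
    have e3 : (fun t => pd m (pd c (fun z => (t - t^2)
        * ∑ l : Fin D, ∑ r : Fin D, z l * z r * R a l b r (t • z))) x)
        = fun t => pd m (fun y : Fin D → ℝ => (fun p : (Fin D → ℝ) × ℝ =>
            fderiv ℝ (fun p : (Fin D → ℝ) × ℝ => (p.2 - p.2^2)
              * ∑ l : Fin D, ∑ r : Fin D, p.1 l * p.1 r * R a l b r (p.2 • p.1)) p
              (Pi.single c 1, 0)) (y, t)) x := by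
      funext t
      have e2 : ∀ yy, (pd c (fun z : Fin D → ℝ => (t - t^2)
            * ∑ l : Fin D, ∑ r : Fin D, z l * z r * R a l b r (t • z))) yy
          = (fun y : Fin D → ℝ => fderiv ℝ (fun p : (Fin D → ℝ) × ℝ => (p.2 - p.2^2)
              * ∑ l : Fin D, ∑ r : Fin D, p.1 l * p.1 r * R a l b r (p.2 • p.1)) (y, t)
              (Pi.single c 1, 0)) yy := by
        intro yy
        exact pd_slice_eq (hQs a b) c t yy
      rw [pd_congr e2 m]
    rw [e3]
    exact cont_pd_slice (contDiff_pdslice (hQs a b) c) m x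
  -- ## explicit values of the integrands
  have hval : ∀ a b c m (t : ℝ), pd m (pd c (fun z => (t - t^2)
      * ∑ l : Fin D, ∑ r : Fin D, z l * z r * R a l b r (t • z))) x
      = (t - t^2) * ((R a c b m (t • x) + t * ∑ r : Fin D, x r * pd m (R a c b r) (t • x))
        + (R a m b c (t • x) + t * ∑ l : Fin D, x l * pd m (R a l b c) (t • x))
        + t * ((∑ r : Fin D, x r * pd c (R a m b r) (t • x))
          + (∑ l : Fin D, x l * pd c (R a l b m) (t • x))
          + t * ∑ l : Fin D, ∑ r : Fin D, x l * x r * pd m (pd c (R a l b r)) (t • x))) := by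
    intro a b c m t
    have hgT := contDiff_gT (fun l r => R a l b r) (fun l r => hsmooth a l b r) t
    have e1 : ∀ z, pd c (fun z => (t - t^2)
          * ∑ l : Fin D, ∑ r : Fin D, z l * z r * R a l b r (t • z)) z
        = (fun z => (t - t^2) * pd c (fun z' : Fin D → ℝ =>
            ∑ l : Fin D, ∑ r : Fin D, z' l * z' r * R a l b r (t • z')) z) z := by
      intro z
      exact pd_const_mul (hgT.differentiable (by norm_num)).differentiableAt (t - t^2) c
    rw [pd_congr e1 m]
    rw [pd_const_mul ((contDiff_pd hgT c).differentiable (by norm_num)).differentiableAt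
      (t - t^2) m]
    congr 1
    exact pd_pd_gT (fun l r => R a l b r) (fun l r => hsmooth a l b r) t c m x
  -- ## put the four terms together
  rw [hrep ν β α μ, hrep μ β α ν, hrep ν α β μ, hrep μ α β ν]
  rw [← intervalIntegral.integral_sub ((hcontN ν β α μ).intervalIntegrable 0 1)
    ((hcontN μ β α ν).intervalIntegrable 0 1)]
  rw [← intervalIntegral.integral_sub (((hcontN ν β α μ).fun_sub (hcontN μ β α ν)).intervalIntegrable 0 1)
    ((hcontN ν α β μ).intervalIntegrable 0 1)]
  rw [← intervalIntegral.integral_add ((((hcontN ν β α μ).fun_sub (hcontN μ β α ν)).fun_sub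
    (hcontN ν α β μ)).intervalIntegrable 0 1) ((hcontN μ α β ν).intervalIntegrable 0 1)]
  -- ## the fundamental theorem of calculus
  set ψ : ℝ → ℝ := fun s => (3*s^2 - 2*s^3) * R μ ν α β (s • x)
      + (s^3 - s^4) * ∑ r : Fin D, x r * pd r (R μ ν α β) (s • x) with hψdef
  have hders : ∀ t ∈ Set.uIcc (0:ℝ) 1, HasDerivAt ψ
      (pd μ (pd α (fun z => (t - t^2)
          * ∑ l : Fin D, ∑ r : Fin D, z l * z r * R ν l β r (t • z))) x
        - pd ν (pd α (fun z => (t - t^2)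
          * ∑ l : Fin D, ∑ r : Fin D, z l * z r * R μ l β r (t • z))) x
        - pd μ (pd β (fun z => (t - t^2)
          * ∑ l : Fin D, ∑ r : Fin D, z l * z r * R ν l α r (t • z))) x
        + pd ν (pd β (fun z => (t - t^2)
          * ∑ l : Fin D, ∑ r : Fin D, z l * z r * R μ l α r (t • z))) x) t := by
    intro t _
    rw [hval ν β α μ t, hval μ β α ν t, hval ν α β μ t, hval μ α β ν t]
    have hu := hasDerivAt_comp_smul (hsmooth μ ν α β) x t
    have hv : HasDerivAt (fun s : ℝ => ∑ r : Fin D, x r * pd r (R μ ν α β) (s • x))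
        (∑ r : Fin D, x r * ∑ l : Fin D, x l * pd l (pd r (R μ ν α β)) (t • x)) t := by
      apply HasDerivAt.fun_sum
      intro r _
      exact (hasDerivAt_comp_smul (contDiff_pd (hsmooth μ ν α β) r) x t).const_mul (x r)
    have hp1 : HasDerivAt (fun s : ℝ => 3*s^2 - 2*s^3) (6*t - 6*t^2) t := by
      have hh1 := ((hasDerivAt_pow 2 t).const_mul (3:ℝ)).fun_sub ((hasDerivAt_pow 3 t).const_mul (2:ℝ))
      refine hh1.congr_deriv ?_; push_cast; ring
    have hp2 : HasDerivAt (fun s : ℝ => s^3 - s^4) (3*t^2 - 4*t^3) t := by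
      have hh2 := (hasDerivAt_pow 3 t).fun_sub (hasDerivAt_pow 4 t)
      refine hh2.congr_deriv ?_; push_cast; ring
    have hder0 := (hp1.fun_mul hu).fun_add (hp2.fun_mul hv)
    have hψeq : ψ = fun s : ℝ => (3*s^2 - 2*s^3) * R μ ν α β (s • x)
        + (s^3 - s^4) * ∑ r : Fin D, x r * pd r (R μ ν α β) (s • x) := hψdef
    rw [hψeq]
    refine hder0.congr_deriv (Eq.symm ?_)
    have hZ := hZv (t • x)
    have hO : (∑ r : Fin D, x r * pd μ (R ν α β r) (t • x))
        + (∑ r : Fin D, x r * pd μ (R ν r β α) (t • x))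
        + (∑ r : Fin D, x r * pd α (R ν μ β r) (t • x))
        + (∑ r : Fin D, x r * pd α (R ν r β μ) (t • x))
        - (∑ r : Fin D, x r * pd ν (R μ α β r) (t • x))
        - (∑ r : Fin D, x r * pd ν (R μ r β α) (t • x))
        - (∑ r : Fin D, x r * pd α (R μ ν β r) (t • x))
        - (∑ r : Fin D, x r * pd α (R μ r β ν) (t • x))
        - (∑ r : Fin D, x r * pd μ (R ν β α r) (t • x))
        - (∑ r : Fin D, x r * pd μ (R ν r α β) (t • x))
        - (∑ r : Fin D, x r * pd β (R ν μ α r) (t • x))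
        - (∑ r : Fin D, x r * pd β (R ν r α μ) (t • x))
        + (∑ r : Fin D, x r * pd ν (R μ β α r) (t • x))
        + (∑ r : Fin D, x r * pd ν (R μ r α β) (t • x))
        + (∑ r : Fin D, x r * pd β (R μ ν α r) (t • x))
        + (∑ r : Fin D, x r * pd β (R μ r α ν) (t • x))
        = 6 * ∑ r : Fin D, x r * pd r (R μ ν α β) (t • x) := by
      rw [Finset.mul_sum]
      simp only [← Finset.sum_add_distrib, ← Finset.sum_sub_distrib]
      apply Finset.sum_congr rfl
      intro r _
      linear_combination (x r) * hAlgOr r (t • x)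
    have hW : (∑ l : Fin D, ∑ r : Fin D, x l * x r * pd μ (pd α (R ν l β r)) (t • x))
        - (∑ l : Fin D, ∑ r : Fin D, x l * x r * pd ν (pd α (R μ l β r)) (t • x))
        - (∑ l : Fin D, ∑ r : Fin D, x l * x r * pd μ (pd β (R ν l α r)) (t • x))
        + (∑ l : Fin D, ∑ r : Fin D, x l * x r * pd ν (pd β (R μ l α r)) (t • x))
        = ∑ r : Fin D, x r * ∑ l : Fin D, x l * pd l (pd r (R μ ν α β)) (t • x) := by
      have step1 : (∑ l : Fin D, ∑ r : Fin D, x l * x r * pd μ (pd α (R ν l β r)) (t • x))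
          - (∑ l : Fin D, ∑ r : Fin D, x l * x r * pd ν (pd α (R μ l β r)) (t • x))
          - (∑ l : Fin D, ∑ r : Fin D, x l * x r * pd μ (pd β (R ν l α r)) (t • x))
          + (∑ l : Fin D, ∑ r : Fin D, x l * x r * pd ν (pd β (R μ l α r)) (t • x))
          = ∑ l : Fin D, ∑ r : Fin D, x l * x r * pd l (pd r (R μ ν α β)) (t • x) := by
        simp only [← Finset.sum_add_distrib, ← Finset.sum_sub_distrib]
        apply Finset.sum_congr rfl
        intro l _
        apply Finset.sum_congr rfl
        intro r _
        linear_combination (x l * x r) * hAlgW l r (t • x)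
      rw [step1, Finset.sum_comm]
      apply Finset.sum_congr rfl
      intro r _
      rw [Finset.mul_sum]
      apply Finset.sum_congr rfl
      intro l _
      ring
    linear_combination (t - t^2) * hZ + (t^2 - t^3) * hO + (t^3 - t^4) * hW
  have hint : IntervalIntegrable (fun t => pd μ (pd α (fun z => (t - t^2)
          * ∑ l : Fin D, ∑ r : Fin D, z l * z r * R ν l β r (t • z))) x
        - pd ν (pd α (fun z => (t - t^2)
          * ∑ l : Fin D, ∑ r : Fin D, z l * z r * R μ l β r (t • z))) x
        - pd μ (pd β (fun z => (t - t^2)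
          * ∑ l : Fin D, ∑ r : Fin D, z l * z r * R ν l α r (t • z))) x
        + pd ν (pd β (fun z => (t - t^2)
          * ∑ l : Fin D, ∑ r : Fin D, z l * z r * R μ l α r (t • z))) x)
      MeasureTheory.volume 0 1 :=
    ((((hcontN ν β α μ).sub (hcontN μ β α ν)).sub (hcontN ν α β μ)).add
      (hcontN μ α β ν)).intervalIntegrable 0 1
  rw [intervalIntegral.integral_eq_sub_of_hasDerivAt hders hint]
  rw [hψdef]
  norm_num [one_smul]
end

section
/- Let D ≥ 1, let ε_{μ₁…μ_D} denote the Levi-Civita symbol on {1,…,D}^D (the sign of the permutation (μ₁,…,μ_D) when all indices are distinct, and 0 otherwise), and let T^{μν} be a smooth symmetric tensor field on ℝ^D. Define τ_{μ₁…μ_{D−1}ν₁…ν_{D−1}} := Σ_{μ,ν} T^{μν} ε_{μμ₁…μ_{D−1}} ε_{νν₁…ν_{D−1}}. Then the following are equivalent: (a) Σ_μ ∂_μ T^{μν} = 0 identically on ℝ^D for every ν; (b) for all indices μ₀, μ₁, …, μ_{D−1}, ν₁, …, ν_{D−1}, the total antisymmetrization over (μ₀, μ₁, …, μ_{D−1})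 of ∂_{μ₀} τ_{μ₁…μ_{D−1}ν₁…ν_{D−1}}, i.e., Σ_{σ ∈ S_D} sgn(σ) ∂_{μ_{σ(0)}} τ_{μ_{σ(1)}…μ_{σ(D−1)}ν₁…ν_{D−1}}, vanishes identically on ℝ^D. -/
/-- The Levi-Civita symbol `ε_{μ₁…μ_D}` on `{1,…,D}^D`: the sign of the permutation
`(μ₁,…,μ_D)` when all indices are distinct, and `0` otherwise. -/
noncomputable def lcSymbol {D : ℕ} (μ : Fin D → Fin D) : ℝ :=
  if h : Function.Bijective μ then ((Equiv.Perm.sign (Equiv.ofBijective μ h) : ℤ) : ℝ) else 0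

lemma lcSymbol_of_not_injective {D : ℕ} {μ : Fin D → Fin D} (h : ¬ Function.Injective μ) :
    lcSymbol μ = 0 := dif_neg fun hb => h hb.1

lemma lcSymbol_ne_zero {D : ℕ} {μ : Fin D → Fin D} (h : Function.Bijective μ) :
    lcSymbol μ ≠ 0 := by
  rw [lcSymbol, dif_pos h]
  rcases Int.units_eq_one_or (Equiv.Perm.sign (Equiv.ofBijective μ h)) with h' | h' <;>
    simp [h']

lemma sign_sq {D : ℕ} (σ : Equiv.Perm (Fin D)) :
    ((Equiv.Perm.sign σ : ℤ) : ℝ) * ((Equiv.Perm.sign σ : ℤ) : ℝ) = 1 := by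
  rcases Int.units_eq_one_or (Equiv.Perm.sign σ) with h | h <;> simp [h]

lemma lcSymbol_cons {d : ℕ} (μ : Fin (d+1) → Fin (d+1)) (hμ : Function.Bijective μ)
    (σ : Equiv.Perm (Fin (d+1))) (a : Fin (d+1)) :
    lcSymbol (Fin.cons a (fun i => μ (σ i.succ)))
      = if a = μ (σ 0) then lcSymbol μ * ((Equiv.Perm.sign σ : ℤ) : ℝ) else 0 := by
  split_ifs with ha
  · subst ha
    have hc : Fin.cons (μ (σ 0)) (fun i => μ (σ i.succ)) = fun k => μ (σ k) := by
      funext k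
      cases k using Fin.cases <;> simp
    rw [hc]
    have hb : Function.Bijective (fun k => μ (σ k)) := hμ.comp σ.bijective
    rw [lcSymbol, dif_pos hb, lcSymbol, dif_pos hμ]
    have he : Equiv.ofBijective (fun k => μ (σ k)) hb
        = (Equiv.ofBijective μ hμ) * σ := Equiv.ext fun k => rfl
    rw [he, map_mul]
    push_cast
    ring
  · apply lcSymbol_of_not_injective
    obtain ⟨k, hk⟩ := (hμ.comp σ.bijective).surjective a
    intro hinj
    cases k using Fin.cases with
    | zero => exact ha hk.symm
    | succ j =>
      have h0 : (Fin.cons a (fun i => μ (σ i.succ)) : Fin (d+1) → Fin (d+1)) 0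
          = (Fin.cons a (fun i => μ (σ i.succ)) : Fin (d+1) → Fin (d+1)) j.succ := by
        simp only [Fin.cons_zero, Fin.cons_succ]
        exact hk.symm
      exact (Fin.succ_ne_zero j) (hinj h0).symm

lemma lcSymbol_cons_succAbove_ne {d : ℕ} {ν b : Fin (d+1)} (h : b ≠ ν) :
    lcSymbol (Fin.cons b ν.succAbove) = 0 := by
  apply lcSymbol_of_not_injective
  obtain ⟨z, hz⟩ := Fin.exists_succAbove_eq h
  intro hinj
  have h0 : (Fin.cons b ν.succAbove : Fin (d+1) → Fin (d+1)) 0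
      = (Fin.cons b ν.succAbove : Fin (d+1) → Fin (d+1)) z.succ := by
    simp [hz]
  exact (Fin.succ_ne_zero z) (hinj h0).symm

lemma lcSymbol_cons_succAbove_self {d : ℕ} (ν : Fin (d+1)) :
    lcSymbol (Fin.cons ν ν.succAbove) ≠ 0 := by
  apply lcSymbol_ne_zero
  rw [Fintype.bijective_iff_injective_and_card]
  refine ⟨?_, rfl⟩
  intro k l hkl
  cases k using Fin.cases with
  | zero =>
    cases l using Fin.cases with
    | zero => rfl
    | succ j => simp at hkl
  | succ i =>
    cases l using Fin.cases with
    | zero => simp at hkl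
    | succ j => simp at hkl; exact congrArg Fin.succ hkl

lemma pd_sum2 {D : ℕ} (α : Fin D) (f : Fin D → Fin D → (Fin D → ℝ) → ℝ)
    (hf : ∀ a b, Differentiable ℝ (f a b)) (c e : Fin D → ℝ) (x : Fin D → ℝ) :
    pd α (fun y => ∑ a, ∑ b, f a b y * c a * e b) x
      = ∑ a, ∑ b, pd α (f a b) x * c a * e b := by
  unfold pd
  have hab : ∀ a b, DifferentiableAt ℝ (fun y => f a b y * c a * e b) x :=
    fun a b => (((hf a b) x).mul_const _).mul_const _
  have hA : ∀ a, DifferentiableAt ℝ (fun y => ∑ b, f a b y * c a * e b) x :=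
    fun a => DifferentiableAt.fun_sum fun b _ => hab a b
  rw [fderiv_fun_sum (fun a _ => hA a), ContinuousLinearMap.sum_apply]
  refine Finset.sum_congr rfl fun a _ => ?_
  rw [fderiv_fun_sum (fun b _ => hab a b), ContinuousLinearMap.sum_apply]
  refine Finset.sum_congr rfl fun b _ => ?_
  rw [show (fun y => f a b y * c a * e b) = fun y => f a b y * (c a * e b) by
    funext y; ring]
  rw [fderiv_mul_const ((hf a b) x)]
  simp [smul_eq_mul]
  ring

/-- For a smooth symmetric 2-tensor `T^{μν}` on `ℝ^D` and its dual
`τ_{μ₁…μ_{D−1}ν₁…ν_{D−1}} = Σ_{μν} T^{μν} ε_{μμ₁…μ_{D−1}} ε_{νν₁…ν_{D−1}}`, the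
conservation law `Σ_μ ∂_μ T^{μν} = 0` holds iff the total antisymmetrization of
`∂_{μ₀} τ_{μ₁…μ_{D−1}ν₁…ν_{D−1}}` over `(μ₀, μ₁, …, μ_{D−1})` vanishes identically.
(Here `D = d + 1 ≥ 1`.) -/
theorem conservation_iff_dual_closed (d : ℕ)
    (T : Fin (d + 1) → Fin (d + 1) → (Fin (d + 1) → ℝ) → ℝ)
    (hsmooth : ∀ μ ν, ContDiff ℝ (⊤ : ℕ∞) (T μ ν))
    (hsym : ∀ μ ν, T μ ν = T ν μ)
    (τ : (Fin d → Fin (d + 1)) → (Fin d → Fin (d + 1)) → (Fin (d + 1) → ℝ) → ℝ)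
    (hτ : ∀ μs νs x, τ μs νs x =
      ∑ μ : Fin (d + 1), ∑ ν : Fin (d + 1),
        T μ ν x * lcSymbol (Fin.cons μ μs) * lcSymbol (Fin.cons ν νs)) :
    (∀ ν x, ∑ μ : Fin (d + 1), pd μ (T μ ν) x = 0) ↔
    (∀ (μ : Fin (d + 1) → Fin (d + 1)) (νs : Fin d → Fin (d + 1)) (x : Fin (d + 1) → ℝ),
      ∑ σ : Equiv.Perm (Fin (d + 1)),
        ((Equiv.Perm.sign σ : ℤ) : ℝ) *
          pd (μ (σ 0)) (τ (fun i => μ (σ i.succ)) νs) x = 0) := by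
  classical
  have hdiff : ∀ a b, Differentiable ℝ (T a b) := fun a b =>
    (hsmooth a b).differentiable (by simp)
  have pdτ : ∀ (α : Fin (d+1)) (μs νs : Fin d → Fin (d+1)) (x : Fin (d+1) → ℝ),
      pd α (τ μs νs) x
        = ∑ a, ∑ b, pd α (T a b) x * lcSymbol (Fin.cons a μs) * lcSymbol (Fin.cons b νs) := by
    intro α μs νs x
    have hfun : τ μs νs = fun y => ∑ a, ∑ b,
        T a b y * lcSymbol (Fin.cons a μs) * lcSymbol (Fin.cons b νs) := funext (hτ μs νs)
    rw [hfun, pd_sum2 α T hdiff _ _ x]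
  -- central formula for bijective μ
  have key : ∀ (μ : Fin (d+1) → Fin (d+1)), Function.Bijective μ →
      ∀ (νs : Fin d → Fin (d+1)) (x : Fin (d+1) → ℝ),
      (∑ σ : Equiv.Perm (Fin (d + 1)),
        ((Equiv.Perm.sign σ : ℤ) : ℝ) *
          pd (μ (σ 0)) (τ (fun i => μ (σ i.succ)) νs) x)
      = lcSymbol μ * (Fintype.card (Equiv.Perm (Fin d)) : ℝ) *
          ∑ b, (∑ a, pd a (T a b) x) * lcSymbol (Fin.cons b νs) := by
    intro μ hμ νs x
    have step1 : ∀ σ : Equiv.Perm (Fin (d+1)),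
        ((Equiv.Perm.sign σ : ℤ) : ℝ) * pd (μ (σ 0)) (τ (fun i => μ (σ i.succ)) νs) x
        = lcSymbol μ * ∑ b, pd (μ (σ 0)) (T (μ (σ 0)) b) x * lcSymbol (Fin.cons b νs) := by
      intro σ
      rw [pdτ]
      rw [Finset.sum_comm]
      simp only [lcSymbol_cons μ hμ σ, mul_ite, mul_zero, ite_mul, zero_mul]
      rw [Finset.mul_sum, Finset.mul_sum]
      refine Finset.sum_congr rfl fun b _ => ?_
      rw [Finset.sum_ite_eq' Finset.univ (μ (σ 0))
        (fun a => pd (μ (σ 0)) (T a b) x * (lcSymbol μ * ((Equiv.Perm.sign σ : ℤ) : ℝ))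
          * lcSymbol (Fin.cons b νs))]
      simp only [Finset.mem_univ, if_true]
      have hs := sign_sq σ
      set s := ((Equiv.Perm.sign σ : ℤ) : ℝ)
      set P := pd (μ (σ 0)) (T (μ (σ 0)) b) x
      set Q := lcSymbol (Fin.cons b νs)
      set L := lcSymbol μ
      calc s * (P * (L * s) * Q) = (s * s) * (L * (P * Q)) := by ring
        _ = L * (P * Q) := by rw [hs, one_mul]
    rw [Finset.sum_congr rfl fun σ _ => step1 σ, ← Finset.mul_sum]
    have hre : (∑ σ : Equiv.Perm (Fin (d+1)),
        ∑ b, pd (μ (σ 0)) (T (μ (σ 0)) b) x * lcSymbol (Fin.cons b νs))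
        = ∑ pe : Fin (d+1) × Equiv.Perm (Fin d),
            ∑ b, pd (μ pe.1) (T (μ pe.1) b) x * lcSymbol (Fin.cons b νs) := by
      refine (Fintype.sum_equiv Equiv.Perm.decomposeFin.symm _ _ fun pe => ?_).symm
      rcases pe with ⟨p, e⟩
      simp
    rw [hre]
    have hcard : (∑ pe : Fin (d+1) × Equiv.Perm (Fin d),
        ∑ b, pd (μ pe.1) (T (μ pe.1) b) x * lcSymbol (Fin.cons b νs))
        = (Fintype.card (Equiv.Perm (Fin d)) : ℝ) *
            ∑ p, ∑ b, pd (μ p) (T (μ p) b) x * lcSymbol (Fin.cons b νs) := by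
      rw [Fintype.sum_prod_type, Finset.mul_sum]
      refine Finset.sum_congr rfl fun p _ => ?_
      simp [Finset.sum_const, Finset.card_univ, nsmul_eq_mul]
    rw [hcard]
    have h2 : (∑ p, ∑ b, pd (μ p) (T (μ p) b) x * lcSymbol (Fin.cons b νs))
        = ∑ b, (∑ a, pd a (T a b) x) * lcSymbol (Fin.cons b νs) := by
      rw [Finset.sum_comm]
      refine Finset.sum_congr rfl fun b _ => ?_
      rw [← Finset.sum_mul]
      congr 1
      exact Fintype.sum_bijective μ hμ _ _ fun p => rfl
    rw [h2]
    ring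
  constructor
  · intro hcons μ νs x
    by_cases hμ : Function.Bijective μ
    · rw [key μ hμ νs x]
      simp only [hcons, zero_mul, Finset.sum_const_zero, mul_zero]
    · -- involution argument
      have hni : ¬ Function.Injective μ := fun hi =>
        hμ (Finite.injective_iff_bijective.mp hi)
      obtain ⟨i, j, hij, hne⟩ := Function.not_injective_iff.mp hni
      set F : Equiv.Perm (Fin (d+1)) → ℝ := fun σ =>
        ((Equiv.Perm.sign σ : ℤ) : ℝ) * pd (μ (σ 0)) (τ (fun i' => μ (σ i'.succ)) νs) x
        with hF
      show ∑ σ, F σ = 0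
      have hab : ∀ σ : Equiv.Perm (Fin (d+1)), σ⁻¹ i ≠ σ⁻¹ j := fun σ h =>
        hne (by simpa using congrArg σ h)
      have hgs : ∀ (σ : Equiv.Perm (Fin (d+1))) (k : Fin (d+1)),
          μ ((σ * Equiv.swap (σ⁻¹ i) (σ⁻¹ j)) k) = μ (σ k) := by
        intro σ k
        rw [Equiv.Perm.mul_apply, Equiv.swap_apply_def]
        split_ifs with h1 h2
        · rw [h1]; simp [hij]
        · rw [h2]; simp [hij]
        · rfl
      apply Finset.sum_ninvolution (fun σ => σ * Equiv.swap (σ⁻¹ i) (σ⁻¹ j))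
      · intro σ
        have hsign : ((Equiv.Perm.sign (σ * Equiv.swap (σ⁻¹ i) (σ⁻¹ j)) : ℤ) : ℝ)
            = - ((Equiv.Perm.sign σ : ℤ) : ℝ) := by
          rw [map_mul, Equiv.Perm.sign_swap (hab σ)]
          push_cast
          ring
        have hfun : (fun (i' : Fin d) => μ ((σ * Equiv.swap (σ⁻¹ i) (σ⁻¹ j)) i'.succ))
            = fun (i' : Fin d) => μ (σ i'.succ) := funext fun (i' : Fin d) => hgs σ i'.succ
        simp only [hF]
        rw [hsign, hfun, hgs σ 0]
        ring
      · intro σ _ hgσ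
        exact hab σ (Equiv.swap_eq_one_iff.mp (mul_eq_left.mp hgσ))
      · intro σ; exact Finset.mem_univ _
      · intro σ
        have h1 : (σ * Equiv.swap (σ⁻¹ i) (σ⁻¹ j))⁻¹ i = σ⁻¹ j := by
          rw [mul_inv_rev, Equiv.Perm.mul_apply, Equiv.swap_inv, Equiv.swap_apply_left]
        have h2 : (σ * Equiv.swap (σ⁻¹ i) (σ⁻¹ j))⁻¹ j = σ⁻¹ i := by
          rw [mul_inv_rev, Equiv.Perm.mul_apply, Equiv.swap_inv, Equiv.swap_apply_right]
        rw [h1, h2, mul_assoc, Equiv.swap_comm (σ⁻¹ j) (σ⁻¹ i), Equiv.swap_mul_self, mul_one]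
  · intro hclosed ν x
    have h0 := hclosed id ν.succAbove x
    rw [key id Function.bijective_id ν.succAbove x] at h0
    have hL : lcSymbol (id : Fin (d+1) → Fin (d+1)) ≠ 0 :=
      lcSymbol_ne_zero Function.bijective_id
    have hc : (Fintype.card (Equiv.Perm (Fin d)) : ℝ) ≠ 0 := by
      exact_mod_cast Fintype.card_ne_zero
    have hsum : (∑ b, (∑ a, pd a (T a b) x) * lcSymbol (Fin.cons b ν.succAbove)) = 0 := by
      rcases mul_eq_zero.mp h0 with h | h
      · rcases mul_eq_zero.mp h with h' | h'
        · exact absurd h' hL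
        · exact absurd h' hc
      · exact h
    rw [Finset.sum_eq_single ν
      (fun b _ hb => by rw [lcSymbol_cons_succAbove_ne hb, mul_zero])
      (fun h => absurd (Finset.mem_univ ν) h)] at hsum
    rcases mul_eq_zero.mp hsum with h | h
    · exact h
    · exact absurd h (lcSymbol_cons_succAbove_self ν)
end
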